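/- arXiv:1908.08910 — 4 statements merged into one kernel-verified Lean document; each statement's English description precedes it below -/
import Mathlib

section
/- A permutation σ is in the image of the pop-stack operator P if and only if for every pair (Rᵢ, Rᵢ₊₁) of adjacent maximal ascending runs of σ, one has min Rᵢ < max Rᵢ₊₁. -/
/-- The maximal descending runs of a list, in order. -/
def descRuns : List ℕ → List (List ℕ)
  | [] => []
  | a :: l =>
    match descRuns l with
    | (b :: r) :: rs => if b < a then (a :: b :: r) :: rs else [a] :: (b :: r) :: rs
    | _ => [[a]]

/-- The maximal ascending runs of a list, in order. -/
def ascRuns : List ℕ → List (List ℕ)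
  | [] => []
  | a :: l =>
    match ascRuns l with
    | (b :: r) :: rs => if a < b then (a :: b :: r) :: rs else [a] :: (b :: r) :: rs
    | _ => [[a]]

/-- The pop-stack operator: reverse each maximal descending run. -/
def popStack (l : List ℕ) : List ℕ := ((descRuns l).map List.reverse).flatten

/-- `l` is (the one-line notation of) a permutation of `[n] = {1,…,n}`. -/
def IsPermOf (n : ℕ) (l : List ℕ) : Prop := l.Perm (List.range' 1 n)

/-- Minimum of a list of naturals. -/
noncomputable def lmin (l : List ℕ) : ℕ := sInf {x | x ∈ l}

/-- Maximum of a list of naturals. -/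
def lmax (l : List ℕ) : ℕ := l.foldr max 0

/-- Minimum of a finset of naturals. -/
noncomputable def bmin (B : Finset ℕ) : ℕ := sInf (B : Set ℕ)

/-- Maximum of a finset of naturals. -/
def bmax (B : Finset ℕ) : ℕ := B.sup id

/-- A ballot (ordered set partition) with underlying set `U`. -/
def IsBallot (U : Finset ℕ) (l : List (Finset ℕ)) : Prop :=
  (∀ B ∈ l, B.Nonempty) ∧ l.Pairwise Disjoint ∧ l.foldr (· ∪ ·) ∅ = U

/-- A ballot is overlapping if adjacent blocks satisfy
`max Bᵢ > min Bᵢ₊₁` and `min Bᵢ < max Bᵢ₊₁`. -/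
def Overlapping (l : List (Finset ℕ)) : Prop :=
  l.Chain' fun B C => bmin C < bmax B ∧ bmin B < bmax C

/-- `σ` is pop-stacked: it is the image of some permutation of `[n]` under `popStack`. -/
def IsPopStacked (n : ℕ) (σ : List ℕ) : Prop :=
  ∃ π, IsPermOf n π ∧ popStack π = σ

/-- `f_{c,d}(n)`: overlapping ballots of `[n]` whose last block has min `c` and max `d`. -/
noncomputable def fcd (c d n : ℕ) : ℕ :=
  Nat.card {l : List (Finset ℕ) // IsBallot (Finset.Icc 1 n) l ∧ Overlapping l ∧
    ∃ B, l.getLast? = some B ∧ bmin B = c ∧ bmax B = d}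

/-- `f_{c,d}(n,k)`: overlapping ballots of `[n]` with `k` blocks whose last block has
min `c` and max `d`. -/
noncomputable def fcdk (c d n k : ℕ) : ℕ :=
  Nat.card {l : List (Finset ℕ) // IsBallot (Finset.Icc 1 n) l ∧ Overlapping l ∧
    l.length = k ∧ ∃ B, l.getLast? = some B ∧ bmin B = c ∧ bmax B = d}

/-- The number of pop-stacked permutations of `[n]`. -/
noncomputable def popCount (n : ℕ) : ℕ :=
  Nat.card {σ : List ℕ // IsPermOf n σ ∧ IsPopStacked n σ}

/-- The number of pop-stacked permutations of `[n]` with exactly `k` ascending runs. -/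
noncomputable def popCountK (n k : ℕ) : ℕ :=
  Nat.card {σ : List ℕ // IsPermOf n σ ∧ IsPopStacked n σ ∧ (ascRuns σ).length = k}

/-- Greedy sorting with a pop-stack whose contents increase from top to bottom:
push when possible, otherwise pop the whole stack. -/
def greedyPop : List ℕ → List ℕ → List ℕ
  | stack, [] => stack
  | [], a :: rest => greedyPop [a] rest
  | t :: s, a :: rest =>
    if a < t then greedyPop (a :: t :: s) rest
    else (t :: s) ++ greedyPop [a] rest

lemma descRuns_cons (a : ℕ) (l : List ℕ) : descRuns (a :: l) =
    match descRuns l with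
    | (b :: r) :: rs => if b < a then (a :: b :: r) :: rs else [a] :: (b :: r) :: rs
    | _ => [[a]] := rfl

lemma ascRuns_cons (a : ℕ) (l : List ℕ) : ascRuns (a :: l) =
    match ascRuns l with
    | (b :: r) :: rs => if a < b then (a :: b :: r) :: rs else [a] :: (b :: r) :: rs
    | _ => [[a]] := rfl

lemma descRuns_cons_shape (a : ℕ) (l : List ℕ) : ∃ r rs, descRuns (a :: l) = (a :: r) :: rs := by
  rw [descRuns_cons]
  rcases h : descRuns l with _ | ⟨_ | ⟨b, r⟩, rs⟩ <;> simp only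
  · exact ⟨[], [], rfl⟩
  · exact ⟨[], [], rfl⟩
  · by_cases hb : b < a
    · exact ⟨b :: r, rs, by simp [hb]⟩
    · exact ⟨[], (b :: r) :: rs, by simp [hb]⟩

lemma ascRuns_cons_shape (a : ℕ) (l : List ℕ) : ∃ r rs, ascRuns (a :: l) = (a :: r) :: rs := by
  rw [ascRuns_cons]
  rcases h : ascRuns l with _ | ⟨_ | ⟨b, r⟩, rs⟩ <;> simp only
  · exact ⟨[], [], rfl⟩
  · exact ⟨[], [], rfl⟩
  · by_cases hb : a < b
    · exact ⟨b :: r, rs, by simp [hb]⟩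
    · exact ⟨[], (b :: r) :: rs, by simp [hb]⟩

lemma flatten_descRuns : ∀ l : List ℕ, (descRuns l).flatten = l
  | [] => rfl
  | a :: l => by
    cases l with
    | nil => rfl
    | cons c l' =>
      obtain ⟨r, rs, h⟩ := descRuns_cons_shape c l'
      have ih := flatten_descRuns (c :: l')
      rw [h] at ih
      rw [descRuns_cons, h]
      split <;> split_ifs <;> simp_all

lemma flatten_ascRuns : ∀ l : List ℕ, (ascRuns l).flatten = l
  | [] => rfl
  | a :: l => by
    cases l with
    | nil => rfl
    | cons c l' =>
      obtain ⟨r, rs, h⟩ := ascRuns_cons_shape c l'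
      have ih := flatten_ascRuns (c :: l')
      rw [h] at ih
      rw [ascRuns_cons, h]
      split <;> split_ifs <;> simp_all

lemma descRuns_cons_eq {l : List ℕ} {b : ℕ} {r : List ℕ} {rs : List (List ℕ)}
    (a : ℕ) (h : descRuns l = (b :: r) :: rs) :
    descRuns (a :: l) = if b < a then (a :: b :: r) :: rs else [a] :: (b :: r) :: rs := by
  rw [descRuns_cons, h]

lemma ascRuns_cons_eq {l : List ℕ} {b : ℕ} {r : List ℕ} {rs : List (List ℕ)}
    (a : ℕ) (h : ascRuns l = (b :: r) :: rs) :
    ascRuns (a :: l) = if a < b then (a :: b :: r) :: rs else [a] :: (b :: r) :: rs := by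
  rw [ascRuns_cons, h]

lemma descRuns_runs : ∀ l : List ℕ, ∀ r ∈ descRuns l, r.Chain' (fun x y => y < x)
  | [] => by simp [descRuns]
  | a :: l => by
    cases l with
    | nil => simp [descRuns, List.Chain']
    | cons c l' =>
      obtain ⟨r, rs, h⟩ := descRuns_cons_shape c l'
      have ih := descRuns_runs (c :: l')
      rw [h] at ih
      rw [descRuns_cons_eq a h]
      split_ifs with hb
      · intro s hs'
        simp only [List.mem_cons] at hs'
        rcases hs' with rfl | hs
        · exact List.isChain_cons_cons.2 ⟨hb, ih _ (by simp)⟩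
        · exact ih _ (by simp [hs])
      · intro s hs'
        simp only [List.mem_cons] at hs'
        rcases hs' with rfl | hs
        · simp [List.Chain']
        · exact ih _ (List.mem_cons.2 hs)

lemma ascRuns_runs : ∀ l : List ℕ, ∀ r ∈ ascRuns l, r.Chain' (fun x y => x < y)
  | [] => by simp [ascRuns]
  | a :: l => by
    cases l with
    | nil => simp [ascRuns, List.Chain']
    | cons c l' =>
      obtain ⟨r, rs, h⟩ := ascRuns_cons_shape c l'
      have ih := ascRuns_runs (c :: l')
      rw [h] at ih
      rw [ascRuns_cons_eq a h]
      split_ifs with hb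
      · intro s hs'
        simp only [List.mem_cons] at hs'
        rcases hs' with rfl | hs
        · exact List.isChain_cons_cons.2 ⟨hb, ih _ (by simp)⟩
        · exact ih _ (by simp [hs])
      · intro s hs'
        simp only [List.mem_cons] at hs'
        rcases hs' with rfl | hs
        · simp [List.Chain']
        · exact ih _ (List.mem_cons.2 hs)

lemma descRuns_ne_nil : ∀ l : List ℕ, ∀ r ∈ descRuns l, r ≠ []
  | [] => by simp [descRuns]
  | a :: l => by
    obtain ⟨r, rs, h⟩ := descRuns_cons_shape a l
    rw [h]
    intro s hs'
    simp only [List.mem_cons] at hs'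
    rcases hs' with rfl | hs
    · simp
    · cases l with
      | nil => simp [descRuns] at h; simp [h.2] at hs
      | cons c l' =>
        have ih := descRuns_ne_nil (c :: l')
        obtain ⟨r', rs', h'⟩ := descRuns_cons_shape c l'
        rw [descRuns_cons_eq a h'] at h
        rw [h'] at ih
        split_ifs at h with hb
        · injection h with h1 h2; subst h2
          exact ih _ (by simp [hs])
        · injection h with h1 h2; subst h2
          exact ih _ hs

lemma ascRuns_ne_nil : ∀ l : List ℕ, ∀ r ∈ ascRuns l, r ≠ []
  | [] => by simp [ascRuns]
  | a :: l => by
    obtain ⟨r, rs, h⟩ := ascRuns_cons_shape a l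
    rw [h]
    intro s hs'
    simp only [List.mem_cons] at hs'
    rcases hs' with rfl | hs
    · simp
    · cases l with
      | nil => simp [ascRuns] at h; simp [h.2] at hs
      | cons c l' =>
        have ih := ascRuns_ne_nil (c :: l')
        obtain ⟨r', rs', h'⟩ := ascRuns_cons_shape c l'
        rw [ascRuns_cons_eq a h'] at h
        rw [h'] at ih
        split_ifs at h with hb
        · injection h with h1 h2; subst h2
          exact ih _ (by simp [hs])
        · injection h with h1 h2; subst h2
          exact ih _ hs

lemma head?_append_ne_nil {α : Type*} {l : List α} (h : l ≠ []) (t : List α) :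
    (l ++ t).head? = l.head? := by
  cases l with
  | nil => exact absurd rfl h
  | cons a l' => simp

lemma descRuns_chain : ∀ l : List ℕ,
    (descRuns l).Chain' (fun r s => ∀ x ∈ r.getLast?, ∀ y ∈ s.head?, x ≤ y)
  | [] => by simp [descRuns, List.Chain']
  | a :: l => by
    cases l with
    | nil => simp [descRuns, List.Chain']
    | cons c l' =>
      obtain ⟨r, rs, h⟩ := descRuns_cons_shape c l'
      have ih := descRuns_chain (c :: l')
      rw [h] at ih
      rw [descRuns_cons_eq a h]
      rw [List.Chain', List.isChain_cons] at ih
      split_ifs with hb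
      · rw [List.Chain', List.isChain_cons]
        refine ⟨?_, ih.2⟩
        intro y hy x hx
        exact ih.1 y hy x hx
      · rw [List.Chain', List.isChain_cons]
        refine ⟨?_, List.isChain_cons.2 ih⟩
        intro y hy
        simp only [List.head?_cons, Option.mem_some_iff] at hy
        subst hy
        intro x hx z hz
        simp at hx hz
        omega

lemma descRuns_block_append : ∀ b : List ℕ, b ≠ [] → b.Chain' (fun x y => y < x) →
    ∀ l : List ℕ, (∀ x ∈ b.getLast?, ∀ y ∈ l.head?, x ≤ y) →
    descRuns (b ++ l) = b :: descRuns l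
  | [], h, _, _, _ => absurd rfl h
  | [x], _, _, l, hj => by
    cases l with
    | nil => rfl
    | cons c l' =>
      obtain ⟨r, rs, h⟩ := descRuns_cons_shape c l'
      rw [List.singleton_append, descRuns_cons_eq x h, if_neg, h]
      have := hj x (by simp) c (by simp)
      omega
  | x :: y :: b'', _, hch, l, hj => by
    rw [List.Chain', List.isChain_cons_cons] at hch
    have ih := descRuns_block_append (y :: b'') (by simp) hch.2 l
      (by simpa using hj)
    rw [List.cons_append, descRuns_cons_eq x (by rw [List.cons_append] at ih ⊢; exact ih),
      if_pos hch.1]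

lemma ascRuns_block_append : ∀ b : List ℕ, b ≠ [] → b.Chain' (fun x y => x < y) →
    ∀ l : List ℕ, (∀ x ∈ b.getLast?, ∀ y ∈ l.head?, y ≤ x) →
    ascRuns (b ++ l) = b :: ascRuns l
  | [], h, _, _, _ => absurd rfl h
  | [x], _, _, l, hj => by
    cases l with
    | nil => rfl
    | cons c l' =>
      obtain ⟨r, rs, h⟩ := ascRuns_cons_shape c l'
      rw [List.singleton_append, ascRuns_cons_eq x h, if_neg, h]
      have := hj x (by simp) c (by simp)
      omega
  | x :: y :: b'', _, hch, l, hj => by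
    rw [List.Chain', List.isChain_cons_cons] at hch
    have ih := ascRuns_block_append (y :: b'') (by simp) hch.2 l
      (by simpa using hj)
    rw [List.cons_append, ascRuns_cons_eq x (by rw [List.cons_append] at ih ⊢; exact ih),
      if_pos hch.1]

lemma ascRuns_merge : ∀ b : List ℕ, b ≠ [] → b.Chain' (fun x y => x < y) →
    ∀ (c : ℕ) (l' : List ℕ), (∀ x ∈ b.getLast?, x < c) →
    ∃ r rs, ascRuns (c :: l') = (c :: r) :: rs ∧ ascRuns (b ++ c :: l') = (b ++ c :: r) :: rs
  | [], h, _, _, _, _ => absurd rfl h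
  | [x], _, _, c, l', hj => by
    obtain ⟨r, rs, h⟩ := ascRuns_cons_shape c l'
    exact ⟨r, rs, h, by rw [List.singleton_append, ascRuns_cons_eq x h,
      if_pos (hj x (by simp))]; rfl⟩
  | x :: y :: b'', _, hch, c, l', hj => by
    rw [List.Chain', List.isChain_cons_cons] at hch
    obtain ⟨r, rs, h1, h2⟩ := ascRuns_merge (y :: b'') (by simp) hch.2 c l' (by simpa using hj)
    refine ⟨r, rs, h1, ?_⟩
    rw [List.cons_append, ascRuns_cons_eq x (by rw [List.cons_append] at h2 ⊢; exact h2),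
      if_pos hch.1]
    rfl

lemma descRuns_flatten_eq : ∀ bs : List (List ℕ), (∀ b ∈ bs, b ≠ []) →
    (∀ b ∈ bs, b.Chain' (fun x y => y < x)) →
    bs.Chain' (fun r s => ∀ x ∈ r.getLast?, ∀ y ∈ s.head?, x ≤ y) →
    descRuns bs.flatten = bs
  | [], _, _, _ => rfl
  | b :: bs', hne, hch, hj => by
    rw [List.flatten_cons,
      descRuns_block_append b (hne b (by simp)) (hch b (by simp)) _ ?_,
      descRuns_flatten_eq bs' (fun x hx => hne x (by simp [hx]))
        (fun x hx => hch x (by simp [hx])) hj.tail]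
    · intro x hx y hy
      cases bs' with
      | nil => simp at hy
      | cons b₂ bs'' =>
        rw [List.flatten_cons, head?_append_ne_nil (hne b₂ (by simp)) _] at hy
        exact (List.isChain_cons.1 hj).1 b₂ (by simp) x hx y hy

lemma lmin_le {l : List ℕ} {x : ℕ} (h : x ∈ l) : lmin l ≤ x := Nat.sInf_le h

lemma lmin_mem {l : List ℕ} (h : l ≠ []) : lmin l ∈ l := by
  have : {x | x ∈ l}.Nonempty := by
    cases l with
    | nil => exact absurd rfl h
    | cons a t => exact ⟨a, by simp⟩
  exact Nat.sInf_mem this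

lemma le_lmax : ∀ {l : List ℕ} {x : ℕ}, x ∈ l → x ≤ lmax l
  | a :: t, x, h => by
    simp only [lmax, List.foldr_cons]
    rcases List.mem_cons.1 h with rfl | h
    · exact le_max_left _ _
    · exact le_trans (le_lmax h) (le_max_right _ _)

lemma lmax_le : ∀ {l : List ℕ} {c : ℕ}, (∀ x ∈ l, x ≤ c) → lmax l ≤ c
  | [], c, _ => Nat.zero_le c
  | a :: t, c, h => by
    simp only [lmax, List.foldr_cons]
    exact max_le (h a (by simp)) (lmax_le fun x hx => h x (by simp [hx]))

lemma head_le_of_chain : ∀ (r : List ℕ) (a x : ℕ), (a :: r).Chain' (· < ·) → x ∈ a :: r → a ≤ x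
  | [], a, x, _, hx => by simp at hx; omega
  | b :: r', a, x, hch, hx => by
    rw [List.Chain', List.isChain_cons_cons] at hch
    rcases List.mem_cons.1 hx with rfl | hx
    · exact le_refl _
    · exact le_trans (le_of_lt hch.1) (head_le_of_chain r' b x hch.2 hx)

lemma le_getLast_of_chain : ∀ (l : List ℕ), l.Chain' (· < ·) →
    ∀ x ∈ l, ∀ y ∈ l.getLast?, x ≤ y
  | [], _, x, hx, _, _ => by simp at hx
  | [a], _, x, hx, y, hy => by simp_all
  | a :: b :: l', hch, x, hx, y, hy => by
    rw [List.Chain', List.isChain_cons_cons] at hch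
    rw [List.getLast?_cons_cons] at hy
    rcases List.mem_cons.1 hx with rfl | hx
    · exact le_trans (le_of_lt hch.1)
        (le_getLast_of_chain (b :: l') hch.2 b (by simp) y hy)
    · exact le_getLast_of_chain (b :: l') hch.2 x hx y hy

lemma chain'_and {α : Type*} {R S : α → α → Prop} : ∀ {l : List α},
    l.Chain' R → l.Chain' S → l.Chain' (fun a b => R a b ∧ S a b)
  | [], _, _ => List.isChain_nil
  | [a], _, _ => by simp [List.Chain']
  | a :: b :: l, hr, hs => by
    rw [List.Chain', List.isChain_cons_cons] at hr hs ⊢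
    exact ⟨⟨hr.1, hs.1⟩, chain'_and hr.2 hs.2⟩

lemma chain'_mono_mem {α : Type*} {R S : α → α → Prop} : ∀ {l : List α},
    (∀ a ∈ l, ∀ b ∈ l, R a b → S a b) → l.Chain' R → l.Chain' S
  | [], _, _ => List.isChain_nil
  | [a], _, _ => by simp [List.Chain']
  | a :: b :: l, h, hc => by
    rw [List.Chain', List.isChain_cons_cons] at hc ⊢
    exact ⟨h a (by simp) b (by simp) hc.1,
      chain'_mono_mem (fun x hx y hy =>
        h x (List.mem_cons_of_mem a hx) y (List.mem_cons_of_mem a hy)) hc.2⟩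

lemma fwd_aux : ∀ bs : List (List ℕ), (∀ b ∈ bs, b ≠ []) → (∀ b ∈ bs, b.Chain' (· < ·)) →
    bs.Chain' (fun r s => ∀ x ∈ r.head?, ∀ y ∈ s.getLast?, x < y) →
    (ascRuns bs.flatten).Chain' (fun R S => lmin R < lmax S) ∧
    (∀ b₁ ∈ bs.head?, ∃ t rs, ascRuns bs.flatten = (b₁ ++ t) :: rs)
  | [], _, _, _ => ⟨List.isChain_nil, by simp⟩
  | [b], hne, hch, _ => by
    have h := ascRuns_block_append b (hne b (by simp)) (hch b (by simp)) [] (by simp)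
    rw [show ascRuns ([] : List ℕ) = [] from rfl] at h
    simp only [List.flatten_cons, List.flatten_nil]
    rw [h]
    exact ⟨List.isChain_singleton b, by
      intro b₁ hb₁; simp at hb₁; exact ⟨[], [], by simp [hb₁]⟩⟩
  | b :: b₂ :: bs'', hne, hch, hj => by
    have hbne : b ≠ [] := hne b (by simp)
    have hb₂ne : b₂ ≠ [] := hne b₂ (by simp)
    obtain ⟨ihch, ihshape⟩ := fwd_aux (b₂ :: bs'')
      (fun x hx => hne x (List.mem_cons_of_mem b hx))
      (fun x hx => hch x (List.mem_cons_of_mem b hx)) (List.isChain_cons_cons.1 hj).2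
    obtain ⟨t, rs, hshape⟩ := ihshape b₂ (by simp)
    rw [hshape] at ihch
    obtain ⟨c, b₂', rfl⟩ : ∃ c b₂', b₂ = c :: b₂' := by
      cases b₂ with
      | nil => exact absurd rfl hb₂ne
      | cons c b₂' => exact ⟨c, b₂', rfl⟩
    have hflat2 : ((c :: b₂') :: bs'' : List (List ℕ)).flatten = (c :: b₂') ++ bs''.flatten :=
      List.flatten_cons
    rw [List.flatten_cons]
    by_cases hm : b.getLast hbne < c
    · -- merge case
      obtain ⟨r, rs2, h1, h2⟩ := ascRuns_merge b hbne (hch b (by simp)) c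
        (b₂' ++ bs''.flatten)
        (by intro x hx
            rw [List.getLast?_eq_getLast hbne] at hx
            simp at hx; subst hx; exact hm)
      rw [hflat2, List.cons_append] at hshape ⊢
      rw [hshape] at h1
      injection h1 with h1a h1b
      subst h1b
      rw [h2]
      constructor
      · rw [List.Chain', List.isChain_cons] at ihch ⊢
        refine ⟨?_, ihch.2⟩
        intro S hS
        refine lt_of_le_of_lt ?_ (ihch.1 S hS)
        refine lmin_le ?_
        rw [← h1a]
        exact List.mem_append_right b (lmin_mem (by simp))
      · intro b₁ hb₁
        simp only [List.head?_cons, Option.mem_some_iff] at hb₁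
        subst hb₁
        exact ⟨c :: r, rs, rfl⟩
    · -- non-merge case
      have hba := ascRuns_block_append b hbne (hch b (by simp)) ((c :: b₂') ++ bs''.flatten)
        (by intro x hx y hy
            rw [List.getLast?_eq_getLast hbne] at hx
            simp at hx hy; subst hx; subst hy; omega)
      rw [hflat2] at hshape ⊢
      rw [hba, hshape]
      constructor
      · rw [List.Chain', List.isChain_cons_cons]
        refine ⟨?_, ihch⟩
        have hpair := (List.isChain_cons_cons.1 hj).1
        have h1 : b.head hbne < (c :: b₂').getLast (by simp) := by
          apply hpair
          · rw [List.head?_eq_head hbne]; rfl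
          · rw [List.getLast?_eq_getLast (by simp : (c :: b₂') ≠ [])]; rfl
        calc lmin b ≤ b.head hbne := lmin_le (List.head_mem hbne)
          _ < (c :: b₂').getLast (by simp) := h1
          _ ≤ lmax ((c :: b₂') ++ t) :=
            le_lmax (List.mem_append_left t (List.getLast_mem _))
      · intro b₁ hb₁
        simp only [List.head?_cons, Option.mem_some_iff] at hb₁
        subst hb₁
        exact ⟨[], ((c :: b₂') ++ t) :: rs, by simp⟩

lemma flatten_map_reverse_perm : ∀ bs : List (List ℕ),
    ((bs.map List.reverse).flatten).Perm bs.flatten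
  | [] => List.Perm.refl _
  | b :: bs => by
    simp only [List.map_cons, List.flatten_cons]
    exact (List.reverse_perm b).append (flatten_map_reverse_perm bs)

/-- a permutation is pop-stacked iff each pair of adjacent ascending runs
`(Rᵢ, Rᵢ₊₁)` satisfies `min Rᵢ < max Rᵢ₊₁`. -/
theorem statement1 (n : ℕ) (σ : List ℕ) (hσ : IsPermOf n σ) :
    (∃ π, IsPermOf n π ∧ popStack π = σ) ↔
      (ascRuns σ).Chain' (fun R S => lmin R < lmax S) := by
  constructor
  · rintro ⟨π, hπ, rfl⟩
    have hnodup : π.Nodup := hπ.nodup_iff.2 (List.nodup_range')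
    have hflat : (descRuns π).flatten = π := flatten_descRuns π
    have hpairwise : (descRuns π).Pairwise List.Disjoint :=
      ((List.nodup_flatten).1 (by rw [hflat]; exact hnodup)).2
    have hjunc : (descRuns π).Chain' (fun D E => ∀ x ∈ D.getLast?, ∀ y ∈ E.head?, x < y) := by
      refine List.IsChain.imp ?_ (chain'_and (descRuns_chain π) hpairwise.isChain)
      rintro D E ⟨hle, hdisj⟩ x hx y hy
      refine lt_of_le_of_ne (hle x hx y hy) fun heq => ?_
      exact hdisj (List.mem_of_getLast? hx) (heq ▸ List.mem_of_mem_head? hy)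
    have h1 : ∀ b ∈ (descRuns π).map List.reverse, b ≠ [] := by
      intro b hb; simp only [List.mem_map] at hb; obtain ⟨D, hD, rfl⟩ := hb
      simpa using descRuns_ne_nil π D hD
    have h2 : ∀ b ∈ (descRuns π).map List.reverse, b.Chain' (· < ·) := by
      intro b hb; simp only [List.mem_map] at hb; obtain ⟨D, hD, rfl⟩ := hb
      rw [List.Chain', List.isChain_reverse]
      exact descRuns_runs π D hD
    have h3 : ((descRuns π).map List.reverse).Chain'
        (fun r s => ∀ x ∈ r.head?, ∀ y ∈ s.getLast?, x < y) := by
      rw [List.Chain', List.isChain_map]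
      refine List.IsChain.imp ?_ hjunc
      intro D E h x hx y hy
      rw [List.head?_reverse] at hx
      rw [List.getLast?_reverse] at hy
      exact h x hx y hy
    exact (fwd_aux _ h1 h2 h3).1
  · intro hchain
    have hne := ascRuns_ne_nil σ
    have hruns := ascRuns_runs σ
    have h1 : ∀ b ∈ (ascRuns σ).map List.reverse, b ≠ [] := by
      intro b hb; simp only [List.mem_map] at hb; obtain ⟨R, hR, rfl⟩ := hb
      simpa using hne R hR
    have h2 : ∀ b ∈ (ascRuns σ).map List.reverse, b.Chain' (fun x y => y < x) := by
      intro b hb; simp only [List.mem_map] at hb; obtain ⟨R, hR, rfl⟩ := hb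
      rw [List.Chain', List.isChain_reverse]
      exact hruns R hR
    have h3 : ((ascRuns σ).map List.reverse).Chain'
        (fun r s => ∀ x ∈ r.getLast?, ∀ y ∈ s.head?, x ≤ y) := by
      rw [List.Chain', List.isChain_map]
      refine chain'_mono_mem ?_ hchain
      intro R hR S hS h x hx y hy
      rw [List.getLast?_reverse] at hx
      rw [List.head?_reverse] at hy
      obtain ⟨a, R', rfl⟩ : ∃ a R', R = a :: R' := by
        cases R with
        | nil => exact absurd rfl (hne _ hR)
        | cons a R' => exact ⟨a, R', rfl⟩
      simp only [List.head?_cons, Option.mem_some_iff] at hx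
      subst hx
      have ha : a ≤ lmin (a :: R') :=
        head_le_of_chain R' a _ (hruns _ hR) (lmin_mem (by simp))
      have hb : lmax S ≤ y :=
        lmax_le fun z hz => le_getLast_of_chain S (hruns S hS) z hz y hy
      have := h  -- lmin (x :: R') < lmax S
      omega
    refine ⟨((ascRuns σ).map List.reverse).flatten, ?_, ?_⟩
    · exact (flatten_map_reverse_perm (ascRuns σ)).trans (by rw [flatten_ascRuns σ]; exact hσ)
    · unfold popStack
      rw [descRuns_flatten_eq _ h1 h2 h3, List.map_map]
      simp only [Function.comp_def, List.reverse_reverse, List.map_id']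
      exact flatten_ascRuns σ
end

section
/- The map sending a permutation to its sequence of ascending runs (viewed as sets in order of appearance) is a bijection between pop-stacked permutations of [n] and overlapping ballots of [n], i.e., ordered set partitions B₁B₂⋯B_k of [n] such that for all i < k, max Bᵢ > min Bᵢ₊₁ and min Bᵢ < max Bᵢ₊₁. -/
namespace PopAux
open List

@[simp] theorem _root_.List.chain'_nil {α : Type*} {R : α → α → Prop} : Chain' R [] := IsChain.nil

@[simp] theorem _root_.List.chain'_singleton {α : Type*} {R : α → α → Prop} (a : α) :
    Chain' R [a] := List.IsChain.singleton a

@[simp] theorem _root_.List.chain'_cons {α : Type*} {R : α → α → Prop} {a b : α} {l : List α} :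
    Chain' R (a :: b :: l) ↔ R a b ∧ Chain' R (b :: l) := isChain_cons_cons

theorem _root_.List.chain'_cons' {α : Type*} {R : α → α → Prop} {x : α} {l : List α} :
    Chain' R (x :: l) ↔ (∀ y ∈ head? l, R x y) ∧ Chain' R l := isChain_cons

theorem _root_.List.chain'_iff_pairwise {l : List ℕ} :
    Chain' (· < ·) l ↔ Pairwise (· < ·) l := isChain_iff_pairwise

theorem _root_.List.Pairwise.chain' {α : Type*} {R : α → α → Prop} {l : List α}
    (p : Pairwise R l) : Chain' R l := p.isChain

theorem _root_.List.Chain'.imp {α : Type*} {R S : α → α → Prop} (H : ∀ a b, R a b → S a b)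
    {l : List α} (p : Chain' R l) : Chain' S l := List.IsChain.imp H p

theorem _root_.List.Chain'.tail {α : Type*} {R : α → α → Prop} {l : List α}
    (h : Chain' R l) : Chain' R l.tail := List.IsChain.tail h

theorem _root_.List.chain'_reverse {α : Type*} {R : α → α → Prop} {l : List α} :
    Chain' R (reverse l) ↔ Chain' (flip R) l := isChain_reverse

theorem _root_.List.chain'_map {α β : Type*} {R : α → α → Prop} (f : β → α) {l : List β} :
    Chain' R (map f l) ↔ Chain' (fun a b => R (f a) (f b)) l := isChain_map f

theorem getLast!_cons_cons (a b : ℕ) (l : List ℕ) :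
    (a :: b :: l).getLast! = (b :: l).getLast! := by
  simp only [List.getLast!_cons_eq_getLastD, List.getLastD_cons]

theorem head!_mem {l : List ℕ} (h : l ≠ []) : l.head! ∈ l := by
  cases l with
  | nil => simp at h
  | cons a t => simp


theorem getLast!_mem {l : List ℕ} (h : l ≠ []) : l.getLast! ∈ l := by
  induction l with
  | nil => simp at h
  | cons a t ih =>
    cases t with
    | nil => simp [List.getLast!]
    | cons b t' => rw [getLast!_cons_cons]; exact mem_cons_of_mem _ (ih (by simp))

theorem head!_append {l : List ℕ} (m : List ℕ) (h : l ≠ []) :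
    (l ++ m).head! = l.head! := by
  cases l with
  | nil => simp at h
  | cons a t => simp

theorem getLast!_append (l : List ℕ) {m : List ℕ} (h : m ≠ []) :
    (l ++ m).getLast! = m.getLast! := by
  induction l with
  | nil => simp
  | cons a t ih =>
    cases htm : t ++ m with
    | nil => rcases List.append_eq_nil_iff.1 htm with ⟨-, rfl⟩; simp at h
    | cons b s =>
      rw [cons_append, htm, getLast!_cons_cons, ← htm, ih]

theorem le_getLast!_of_chain' {r : List ℕ} (hc : r.Chain' (· < ·)) {x : ℕ}
    (hx : x ∈ r) : x ≤ r.getLast! := by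
  induction r with
  | nil => simp at hx
  | cons a t ih =>
    cases t with
    | nil => simp at hx; simp [hx, List.getLast!]
    | cons b t' =>
      rw [getLast!_cons_cons]
      rcases mem_cons.1 hx with rfl | hx'
      · have hp := (chain'_iff_pairwise.1 hc)
        have : x < (b :: t').getLast! := (List.pairwise_cons.1 hp).1 _ (getLast!_mem (by simp))
        exact this.le
      · exact ih hc.tail hx'

theorem head!_le_of_chain' {r : List ℕ} (hc : r.Chain' (· < ·)) {x : ℕ}
    (hx : x ∈ r) : r.head! ≤ x := by
  cases r with
  | nil => simp at hx
  | cons a t =>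
    rcases mem_cons.1 hx with rfl | hx'
    · simp
    · have hp := chain'_iff_pairwise.1 hc
      exact le_of_lt (by simpa using (List.pairwise_cons.1 hp).1 _ hx')

theorem head!_le_getLast! {r : List ℕ} (hc : r.Chain' (· < ·)) (h : r ≠ []) :
    r.head! ≤ r.getLast! := le_getLast!_of_chain' hc (head!_mem h)

theorem head!_reverse (l : List ℕ) : l.reverse.head! = l.getLast! := by
  induction l with
  | nil => simp
  | cons a t ih =>
    cases t with
    | nil => simp [List.getLast!]
    | cons b t' =>
      rw [reverse_cons, head!_append _ (by simp), ih, getLast!_cons_cons]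

theorem getLast!_reverse (l : List ℕ) : l.reverse.getLast! = l.head! := by
  conv_rhs => rw [← l.reverse_reverse]
  rw [head!_reverse]

theorem chain'_and {α : Type*} {R S : α → α → Prop} : ∀ {l : List α},
    Chain' R l → Chain' S l → Chain' (fun a b => R a b ∧ S a b) l
  | [], _, _ => chain'_nil
  | [_], _, _ => chain'_singleton _
  | a :: b :: t, hR, hS => by
    rw [chain'_cons] at *
    exact ⟨⟨hR.1, hS.1⟩, chain'_and hR.2 hS.2⟩

theorem chain'_imp_mem {α : Type*} {R S : α → α → Prop} : ∀ {l : List α},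
    (∀ a ∈ l, ∀ b ∈ l, R a b → S a b) → Chain' R l → Chain' S l
  | [], _, _ => chain'_nil
  | [_], _, _ => chain'_singleton _
  | a :: b :: t, h, hR => by
    rw [chain'_cons] at *
    exact ⟨h a (by simp) b (by simp) hR.1,
      chain'_imp_mem (fun x hx y hy => h x (mem_cons_of_mem _ hx) y (mem_cons_of_mem _ hy)) hR.2⟩


theorem ascRuns_spec (l : List ℕ) :
    (ascRuns l).flatten = l ∧ (∀ r ∈ ascRuns l, r ≠ []) ∧
    (∀ r ∈ ascRuns l, r.Chain' (· < ·)) ∧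
    (ascRuns l).Chain' (fun r s => ¬ r.getLast! < s.head!) := by
  induction l with
  | nil => simp [ascRuns]
  | cons a l ih =>
    obtain ⟨h1, h2, h3, h4⟩ := ih
    rcases h : ascRuns l with _ | ⟨_ | ⟨b, r⟩, rs⟩
    · rw [h] at h1; simp at h1
      subst h1
      simp [ascRuns]
    · exact absurd rfl (h2 [] (h ▸ mem_cons_self))
    · rw [h] at h1 h2 h3 h4
      by_cases hab : a < b
      · have hdef : ascRuns (a :: l) = (a :: b :: r) :: rs := by
          simp [ascRuns, h, hab]
        rw [hdef]
        refine ⟨by simpa using h1, ?_, ?_, ?_⟩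
        · intro x hx
          rcases mem_cons.1 hx with rfl | hx'
          · simp
          · exact h2 _ (mem_cons_of_mem _ hx')
        · intro x hx
          rcases mem_cons.1 hx with rfl | hx'
          · exact chain'_cons.2 ⟨hab, h3 _ (by simp)⟩
          · exact h3 _ (mem_cons_of_mem _ hx')
        · rw [chain'_cons'] at h4 ⊢
          refine ⟨fun y hy => ?_, h4.2⟩
          rw [getLast!_cons_cons]
          exact h4.1 y hy
      · have hdef : ascRuns (a :: l) = [a] :: (b :: r) :: rs := by
          simp [ascRuns, h, hab]
        rw [hdef]
        refine ⟨by simpa using h1, ?_, ?_, ?_⟩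
        · intro x hx
          rcases mem_cons.1 hx with rfl | hx'
          · simp
          · exact h2 _ hx'
        · intro x hx
          rcases mem_cons.1 hx with rfl | hx'
          · exact chain'_singleton _
          · exact h3 _ hx'
        · exact chain'_cons.2 ⟨by simpa using hab, h4⟩

theorem descRuns_spec (l : List ℕ) :
    (descRuns l).flatten = l ∧ (∀ r ∈ descRuns l, r ≠ []) ∧
    (∀ r ∈ descRuns l, r.Chain' (· > ·)) ∧
    (descRuns l).Chain' (fun r s => ¬ s.head! < r.getLast!) := by
  induction l with
  | nil => simp [descRuns]
  | cons a l ih =>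
    obtain ⟨h1, h2, h3, h4⟩ := ih
    rcases h : descRuns l with _ | ⟨_ | ⟨b, r⟩, rs⟩
    · rw [h] at h1; simp at h1
      subst h1
      simp [descRuns]
    · exact absurd rfl (h2 [] (h ▸ mem_cons_self))
    · rw [h] at h1 h2 h3 h4
      by_cases hab : b < a
      · have hdef : descRuns (a :: l) = (a :: b :: r) :: rs := by
          simp [descRuns, h, hab]
        rw [hdef]
        refine ⟨by simpa using h1, ?_, ?_, ?_⟩
        · intro x hx
          rcases mem_cons.1 hx with rfl | hx'
          · simp
          · exact h2 _ (mem_cons_of_mem _ hx')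
        · intro x hx
          rcases mem_cons.1 hx with rfl | hx'
          · exact chain'_cons.2 ⟨hab, h3 _ (by simp)⟩
          · exact h3 _ (mem_cons_of_mem _ hx')
        · rw [chain'_cons'] at h4 ⊢
          refine ⟨fun y hy => ?_, h4.2⟩
          rw [getLast!_cons_cons]
          exact h4.1 y hy
      · have hdef : descRuns (a :: l) = [a] :: (b :: r) :: rs := by
          simp [descRuns, h, hab]
        rw [hdef]
        refine ⟨by simpa using h1, ?_, ?_, ?_⟩
        · intro x hx
          rcases mem_cons.1 hx with rfl | hx'
          · simp
          · exact h2 _ hx'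
        · intro x hx
          rcases mem_cons.1 hx with rfl | hx'
          · exact chain'_singleton _
          · exact h3 _ hx'
        · exact chain'_cons.2 ⟨by simpa using hab, h4⟩


theorem ascRuns_cons_eq (a : ℕ) (l : List ℕ) {b : ℕ} {r : List ℕ} {rs : List (List ℕ)}
    (h : ascRuns l = (b :: r) :: rs) :
    ascRuns (a :: l) = if a < b then (a :: b :: r) :: rs else [a] :: (b :: r) :: rs := by
  rw [show ascRuns (a :: l) = (match ascRuns l with
    | (b :: r) :: rs => if a < b then (a :: b :: r) :: rs else [a] :: (b :: r) :: rs
    | _ => [[a]]) from rfl, h]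

theorem descRuns_cons_eq (a : ℕ) (l : List ℕ) {b : ℕ} {r : List ℕ} {rs : List (List ℕ)}
    (h : descRuns l = (b :: r) :: rs) :
    descRuns (a :: l) = if b < a then (a :: b :: r) :: rs else [a] :: (b :: r) :: rs := by
  rw [show descRuns (a :: l) = (match descRuns l with
    | (b :: r) :: rs => if b < a then (a :: b :: r) :: rs else [a] :: (b :: r) :: rs
    | _ => [[a]]) from rfl, h]

theorem ascRuns_unique : (rs : List (List ℕ)) → (∀ r ∈ rs, r ≠ []) →
    (∀ r ∈ rs, r.Chain' (· < ·)) →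
    rs.Chain' (fun r s => ¬ r.getLast! < s.head!) →
    ascRuns rs.flatten = rs
  | [], _, _, _ => rfl
  | ([] :: rest), h1, _, _ => absurd rfl (h1 [] (by simp))
  | [a] :: [], _, _, _ => by simp [ascRuns]
  | [a] :: (s :: rest), h1, h2, h3 => by
    have hs : s ≠ [] := h1 s (by simp)
    have ih : ascRuns (s :: rest).flatten = s :: rest :=
      ascRuns_unique (s :: rest) (fun r hr => h1 r (mem_cons_of_mem _ hr))
        (fun r hr => h2 r (mem_cons_of_mem _ hr)) (chain'_cons'.1 h3).2
    rcases s with _ | ⟨b, s'⟩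
    · exact absurd rfl hs
    · have hab : ¬ a < b := by
        have := (chain'_cons.1 h3).1
        simpa using this
      show ascRuns (a :: ((b :: s') :: rest).flatten) = [a] :: (b :: s') :: rest
      rw [ascRuns_cons_eq a _ ih]
      simp [hab]
  | (a :: c :: r'') :: rest, h1, h2, h3 => by
    have hac : a < c := (chain'_cons.1 (h2 (a :: c :: r'') (by simp))).1
    have ih : ascRuns ((c :: r'') :: rest).flatten = (c :: r'') :: rest := by
      apply ascRuns_unique
      · intro r hr
        rcases mem_cons.1 hr with rfl | hr'
        · simp
        · exact h1 r (mem_cons_of_mem _ hr')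
      · intro r hr
        rcases mem_cons.1 hr with rfl | hr'
        · exact (chain'_cons.1 (h2 (a :: c :: r'') (by simp))).2
        · exact h2 r (mem_cons_of_mem _ hr')
      · rw [chain'_cons'] at h3 ⊢
        refine ⟨fun y hy => ?_, h3.2⟩
        have := h3.1 y hy
        rwa [getLast!_cons_cons] at this
    show ascRuns (a :: ((c :: r'') :: rest).flatten) = (a :: c :: r'') :: rest
    rw [ascRuns_cons_eq a _ ih]
    simp [hac]
termination_by rs => rs.flatten.length
decreasing_by all_goals (simp; try omega)

theorem descRuns_unique : (rs : List (List ℕ)) → (∀ r ∈ rs, r ≠ []) →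
    (∀ r ∈ rs, r.Chain' (· > ·)) →
    rs.Chain' (fun r s => ¬ s.head! < r.getLast!) →
    descRuns rs.flatten = rs
  | [], _, _, _ => rfl
  | ([] :: rest), h1, _, _ => absurd rfl (h1 [] (by simp))
  | [a] :: [], _, _, _ => by simp [descRuns]
  | [a] :: (s :: rest), h1, h2, h3 => by
    have hs : s ≠ [] := h1 s (by simp)
    have ih : descRuns (s :: rest).flatten = s :: rest :=
      descRuns_unique (s :: rest) (fun r hr => h1 r (mem_cons_of_mem _ hr))
        (fun r hr => h2 r (mem_cons_of_mem _ hr)) (chain'_cons'.1 h3).2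
    rcases s with _ | ⟨b, s'⟩
    · exact absurd rfl hs
    · have hab : ¬ b < a := by
        have := (chain'_cons.1 h3).1
        simpa using this
      show descRuns (a :: ((b :: s') :: rest).flatten) = [a] :: (b :: s') :: rest
      rw [descRuns_cons_eq a _ ih]
      simp [hab]
  | (a :: c :: r'') :: rest, h1, h2, h3 => by
    have hac : c < a := (chain'_cons.1 (h2 (a :: c :: r'') (by simp))).1
    have ih : descRuns ((c :: r'') :: rest).flatten = (c :: r'') :: rest := by
      apply descRuns_unique
      · intro r hr
        rcases mem_cons.1 hr with rfl | hr'
        · simp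
        · exact h1 r (mem_cons_of_mem _ hr')
      · intro r hr
        rcases mem_cons.1 hr with rfl | hr'
        · exact (chain'_cons.1 (h2 (a :: c :: r'') (by simp))).2
        · exact h2 r (mem_cons_of_mem _ hr')
      · rw [chain'_cons'] at h3 ⊢
        refine ⟨fun y hy => ?_, h3.2⟩
        have := h3.1 y hy
        rwa [getLast!_cons_cons] at this
    show descRuns (a :: ((c :: r'') :: rest).flatten) = (a :: c :: r'') :: rest
    rw [descRuns_cons_eq a _ ih]
    simp [hac]
termination_by rs => rs.flatten.length
decreasing_by all_goals (simp; try omega)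


theorem ascRuns_singleton_run {r : List ℕ} (hr : r ≠ []) (hc : r.Chain' (· < ·)) :
    ascRuns r = [r] := by
  have := ascRuns_unique [r] (by simpa using hr) (by simpa using hc) (chain'_singleton _)
  simpa using this

theorem ascRuns_append_pos : {r : List ℕ} → (hr : r ≠ []) → (hc : r.Chain' (· < ·)) →
    {m : List ℕ} → {s : List ℕ} → {ss : List (List ℕ)} →
    (h : ascRuns m = s :: ss) → (hs : s ≠ []) → (hlt : r.getLast! < s.head!) →
    ascRuns (r ++ m) = (r ++ s) :: ss
  | [], hr, _, _, _, _, _, _, _ => absurd rfl hr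
  | [a], _, _, m, s, ss, h, hs, hlt => by
    rcases s with _ | ⟨b, s'⟩
    · exact absurd rfl hs
    · have hab : a < b := by simpa using hlt
      rw [singleton_append, ascRuns_cons_eq a m h, if_pos hab]
      rfl
  | a :: c :: r'', hr, hc, m, s, ss, h, hs, hlt => by
    have hac : a < c := (chain'_cons.1 hc).1
    have ih : ascRuns ((c :: r'') ++ m) = ((c :: r'') ++ s) :: ss :=
      ascRuns_append_pos (by simp) (chain'_cons.1 hc).2 h hs
        (by rwa [getLast!_cons_cons] at hlt)
    rcases s with _ | ⟨b, s'⟩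
    · exact absurd rfl hs
    · rw [cons_append, ascRuns_cons_eq a _ ih, if_pos hac]
      rfl

theorem ascRuns_append_neg : {r : List ℕ} → (hr : r ≠ []) → (hc : r.Chain' (· < ·)) →
    {m : List ℕ} → {s : List ℕ} → {ss : List (List ℕ)} →
    (h : ascRuns m = s :: ss) → (hs : s ≠ []) → (hlt : ¬ r.getLast! < s.head!) →
    ascRuns (r ++ m) = r :: s :: ss
  | [], hr, _, _, _, _, _, _, _ => absurd rfl hr
  | [a], _, _, m, s, ss, h, hs, hlt => by
    rcases s with _ | ⟨b, s'⟩
    · exact absurd rfl hs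
    · have hab : ¬ a < b := by simpa using hlt
      rw [singleton_append, ascRuns_cons_eq a m h, if_neg hab]
  | a :: c :: r'', hr, hc, m, s, ss, h, hs, hlt => by
    have hac : a < c := (chain'_cons.1 hc).1
    have ih : ascRuns ((c :: r'') ++ m) = (c :: r'') :: s :: ss :=
      ascRuns_append_neg (by simp) (chain'_cons.1 hc).2 h hs
        (by rwa [getLast!_cons_cons] at hlt)
    rw [cons_append, ascRuns_cons_eq a _ ih, if_pos hac]

theorem ascRuns_append_nil : {r : List ℕ} → (hr : r ≠ []) → (hc : r.Chain' (· < ·)) →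
    {m : List ℕ} → (h : ascRuns m = []) → ascRuns (r ++ m) = [r] := by
  intro r hr hc m h
  have hm : m = [] := by
    have := (ascRuns_spec m).1
    rw [h] at this
    simpa using this.symm
  subst hm
  rw [append_nil]
  exact ascRuns_singleton_run hr hc

/-- The key merging lemma. -/
theorem merge_chain : (rs : List (List ℕ)) → rs ≠ [] →
    (∀ r ∈ rs, r ≠ []) → (∀ r ∈ rs, r.Chain' (· < ·)) →
    rs.Chain' (fun r s => r.head! < s.getLast!) →
    ∃ s ss, ascRuns rs.flatten = s :: ss ∧ s.head! = rs.head!.head! ∧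
      rs.head!.getLast! ≤ s.getLast! ∧
      (s :: ss).Chain' (fun r s => r.head! < s.getLast!)
  | [], h, _, _, _ => absurd rfl h
  | [r], _, h1, h2, _ => by
    refine ⟨r, [], ?_, by simp, by simp, chain'_singleton _⟩
    rw [show ([r] : List (List ℕ)).flatten = r by simp]
    exact ascRuns_singleton_run (h1 r (by simp)) (h2 r (by simp))
  | r :: r2 :: rest, _, h1, h2, h3 => by
    have hr : r ≠ [] := h1 r (by simp)
    have hrc : r.Chain' (· < ·) := h2 r (by simp)
    have hr2 : r2 ≠ [] := h1 r2 (by simp)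
    have hr2c : r2.Chain' (· < ·) := h2 r2 (by simp)
    obtain ⟨s, ss, heq, hhead, hlast, hchain⟩ :=
      merge_chain (r2 :: rest) (by simp) (fun x hx => h1 x (mem_cons_of_mem _ hx))
        (fun x hx => h2 x (mem_cons_of_mem _ hx)) (chain'_cons'.1 h3).2
    have hs : s ≠ [] := (ascRuns_spec _).2.1 s (heq ▸ mem_cons_self)
    have hsc : s.Chain' (· < ·) := (ascRuns_spec _).2.2.1 s (heq ▸ mem_cons_self)
    have hadj : r.head! < r2.getLast! := (chain'_cons.1 h3).1
    have hflat : (r :: r2 :: rest).flatten = r ++ (r2 :: rest).flatten := by simp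
    rw [hflat]
    by_cases hbr : r.getLast! < s.head!
    · simp only [List.head!_cons] at hhead hlast ⊢
      refine ⟨r ++ s, ss, ascRuns_append_pos hr hrc heq hs hbr, head!_append _ hr, ?_, ?_⟩
      · rw [getLast!_append _ hs]
        calc r.getLast! ≤ s.head! := le_of_lt hbr
        _ ≤ s.getLast! := head!_le_getLast! hsc hs
      · rw [chain'_cons'] at hchain ⊢
        refine ⟨fun y hy => ?_, hchain.2⟩
        have h4 := hchain.1 y hy
        rw [head!_append _ hr]
        calc r.head! ≤ r.getLast! := head!_le_getLast! hrc hr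
        _ < s.head! := hbr
        _ < y.getLast! := h4
    · simp only [List.head!_cons] at hhead hlast ⊢
      refine ⟨r, s :: ss, ascRuns_append_neg hr hrc heq hs hbr, rfl, le_refl _, ?_⟩
      rw [chain'_cons]
      refine ⟨?_, hchain⟩
      calc r.head! < r2.getLast! := hadj
      _ ≤ s.getLast! := hlast


theorem flatten_map_reverse_perm (L : List (List ℕ)) :
    ((L.map reverse).flatten).Perm L.flatten := by
  induction L with
  | nil => simp
  | cons a t ih => simpa using (a.reverse_perm).append ih

theorem popStack_perm (l : List ℕ) : (popStack l).Perm l := by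
  have h := (descRuns_spec l).1
  calc popStack l = ((descRuns l).map reverse).flatten := rfl
  _ ~ (descRuns l).flatten := flatten_map_reverse_perm _
  _ = l := h

theorem chain'_strict_asc {L : List (List ℕ)} (hne : ∀ r ∈ L, r ≠ [])
    (hd : Pairwise List.Disjoint L)
    (h : L.Chain' fun r s => ¬ r.getLast! < s.head!) :
    L.Chain' fun r s => s.head! < r.getLast! := by
  have := chain'_and h (Pairwise.chain' hd)
  refine chain'_imp_mem (fun a ha b hb hab => ?_) this
  rcases hab with ⟨h1, h2⟩
  refine lt_of_le_of_ne (not_lt.1 h1) fun he => ?_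
  exact h2 (by rw [he]; exact getLast!_mem (hne a ha)) (head!_mem (hne b hb))

theorem chain'_strict_desc {L : List (List ℕ)} (hne : ∀ r ∈ L, r ≠ [])
    (hd : Pairwise List.Disjoint L)
    (h : L.Chain' fun r s => ¬ s.head! < r.getLast!) :
    L.Chain' fun r s => r.getLast! < s.head! := by
  have := chain'_and h (Pairwise.chain' hd)
  refine chain'_imp_mem (fun a ha b hb hab => ?_) this
  rcases hab with ⟨h1, h2⟩
  refine lt_of_le_of_ne (not_lt.1 h1) fun he => ?_
  exact h2 (getLast!_mem (hne a ha)) (by rw [he]; exact head!_mem (hne b hb))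

theorem ascRuns_adj_strict (σ : List ℕ) (hn : σ.Nodup) :
    (ascRuns σ).Chain' fun r s => s.head! < r.getLast! := by
  obtain ⟨a1, a2, a3, a4⟩ := ascRuns_spec σ
  have hfl : (ascRuns σ).flatten.Nodup := by rw [a1]; exact hn
  exact chain'_strict_asc a2 ((nodup_flatten.1 hfl).2) a4

theorem chain_of_popStack (π : List ℕ) (hn : π.Nodup) :
    (ascRuns (popStack π)).Chain' fun r s => r.head! < s.getLast! := by
  obtain ⟨d1, d2, d3, d4⟩ := descRuns_spec π
  rcases hds : descRuns π with _ | ⟨d, ds⟩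
  · have : popStack π = [] := by simp [popStack, hds]
    simp [this, ascRuns]
  · rw [hds] at d1 d2 d3 d4
    have hfl : ((d :: ds) : List (List ℕ)).flatten.Nodup := by rw [d1]; exact hn
    have hd : Pairwise List.Disjoint (d :: ds) := (nodup_flatten.1 hfl).2
    have strict : (d :: ds).Chain' fun r s => r.getLast! < s.head! :=
      chain'_strict_desc d2 hd d4
    have hmain := merge_chain ((d :: ds).map reverse) (by simp)
      (fun r hr => by
        rcases mem_map.1 hr with ⟨x, hx, rfl⟩
        simpa using d2 x hx)
      (fun r hr => by
        rcases mem_map.1 hr with ⟨x, hx, rfl⟩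
        rw [chain'_reverse]
        exact (d3 x hx).imp fun a b h => h)
      (by
        rw [chain'_map]
        refine strict.imp fun a b hab => ?_
        rwa [head!_reverse, getLast!_reverse])
    obtain ⟨s, ss, heq, -, -, hchain⟩ := hmain
    have : popStack π = ((d :: ds).map reverse).flatten := by
      simp [popStack, hds]
    rw [this, heq]
    exact hchain

theorem popStacked_of_chain (σ : List ℕ)
    (h : (ascRuns σ).Chain' fun r s => r.head! < s.getLast!) :
    ∃ π, π.Perm σ ∧ popStack π = σ := by
  obtain ⟨a1, a2, a3, a4⟩ := ascRuns_spec σ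
  refine ⟨((ascRuns σ).map reverse).flatten, ?_, ?_⟩
  · exact (flatten_map_reverse_perm _).trans (by rw [a1])
  · have hdesc : descRuns (((ascRuns σ).map reverse).flatten) = (ascRuns σ).map reverse := by
      apply descRuns_unique
      · intro r hr
        rcases mem_map.1 hr with ⟨x, hx, rfl⟩
        simpa using a2 x hx
      · intro r hr
        rcases mem_map.1 hr with ⟨x, hx, rfl⟩
        rw [chain'_reverse]
        exact (a3 x hx).imp fun a b h => h
      · rw [chain'_map]
        refine h.imp fun a b hab => ?_
        rw [head!_reverse, getLast!_reverse]
        omega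
    rw [popStack, hdesc, map_map]
    have : (reverse ∘ reverse : List ℕ → List ℕ) = id := by
      funext x; simp
    rw [this, map_id, a1]


theorem toFinset_range' (n : ℕ) : (List.range' 1 n).toFinset = Finset.Icc 1 n := by
  ext x
  simp only [List.mem_toFinset, List.mem_range'_1, Finset.mem_Icc]
  omega

theorem bmax_toFinset {r : List ℕ} (hr : r ≠ []) (hc : r.Chain' (· < ·)) :
    bmax r.toFinset = r.getLast! := by
  apply _root_.le_antisymm
  · exact Finset.sup_le fun x hx => le_getLast!_of_chain' hc (mem_toFinset.1 hx)
  · exact Finset.le_sup (f := id) (mem_toFinset.2 (getLast!_mem hr))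

theorem bmin_toFinset {r : List ℕ} (hr : r ≠ []) (hc : r.Chain' (· < ·)) :
    bmin r.toFinset = r.head! := by
  apply IsLeast.csInf_eq
  constructor
  · simpa using head!_mem hr
  · intro x hx
    exact head!_le_of_chain' hc (by simpa using hx)

theorem foldr_union_toFinset (L : List (List ℕ)) :
    (L.map List.toFinset).foldr (· ∪ ·) ∅ = L.flatten.toFinset := by
  induction L with
  | nil => simp
  | cons a t ih => simp [ih]

theorem sort_ne_nil {B : Finset ℕ} (h : B.Nonempty) : B.sort (· ≤ ·) ≠ [] := by
  intro he
  have := Finset.sort_toFinset B (· ≤ ·)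
  rw [he] at this
  simp at this
  exact h.ne_empty this.symm

theorem sort_chain_lt (B : Finset ℕ) : (B.sort (· ≤ ·)).Chain' (· < ·) :=
  chain'_iff_pairwise.2 ((Finset.sortedLT_sort B).pairwise)

theorem bmax_sort {B : Finset ℕ} (h : B.Nonempty) : (B.sort (· ≤ ·)).getLast! = bmax B := by
  conv_rhs => rw [← Finset.sort_toFinset B (· ≤ ·)]
  rw [bmax_toFinset (sort_ne_nil h) (sort_chain_lt B)]

theorem bmin_sort {B : Finset ℕ} (h : B.Nonempty) : (B.sort (· ≤ ·)).head! = bmin B := by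
  conv_rhs => rw [← Finset.sort_toFinset B (· ≤ ·)]
  rw [bmin_toFinset (sort_ne_nil h) (sort_chain_lt B)]

theorem map_toFinset_sort (l : List (Finset ℕ)) :
    (l.map ((fun B => Finset.sort B (· ≤ ·)))).map List.toFinset = l := by
  rw [map_map]
  have : (List.toFinset ∘ (fun B => Finset.sort B (· ≤ ·)) : Finset ℕ → Finset ℕ) = id := by
    funext B
    simp [Finset.sort_toFinset]
  rw [this, map_id]

/-- The forward map is well defined. -/
theorem forward_mem {n : ℕ} {σ : List ℕ} (h1 : IsPermOf n σ) (h2 : IsPopStacked n σ) :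
    IsBallot (Finset.Icc 1 n) ((ascRuns σ).map List.toFinset) ∧
      Overlapping ((ascRuns σ).map List.toFinset) := by
  obtain ⟨a1, a2, a3, a4⟩ := ascRuns_spec σ
  have hnd : σ.Nodup := h1.nodup_iff.2 (List.nodup_range')
  have hfl : (ascRuns σ).flatten.Nodup := by rw [a1]; exact hnd
  have hpd : Pairwise List.Disjoint (ascRuns σ) := (nodup_flatten.1 hfl).2
  refine ⟨⟨?_, ?_, ?_⟩, ?_⟩
  · intro B hB
    rcases mem_map.1 hB with ⟨r, hr, rfl⟩
    exact ⟨r.head!, mem_toFinset.2 (head!_mem (a2 r hr))⟩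
  · rw [pairwise_map]
    exact hpd.imp fun {a b} h => Finset.disjoint_left.2
      fun x hx1 hx2 => h (mem_toFinset.1 hx1) (mem_toFinset.1 hx2)
  · rw [foldr_union_toFinset, a1, List.toFinset_eq_of_perm _ _ h1, toFinset_range']
  · obtain ⟨π, hπ, hps⟩ := h2
    have hπnd : π.Nodup := hπ.nodup_iff.2 (List.nodup_range')
    have c1 : (ascRuns σ).Chain' fun r s => r.head! < s.getLast! := by
      rw [← hps]; exact chain_of_popStack π hπnd
    have c2 := ascRuns_adj_strict σ hnd
    rw [Overlapping, chain'_map]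
    refine chain'_imp_mem (fun r hr s hs hrs => ?_) (chain'_and c1 c2)
    rw [bmin_toFinset (a2 r hr) (a3 r hr), bmin_toFinset (a2 s hs) (a3 s hs),
      bmax_toFinset (a2 r hr) (a3 r hr), bmax_toFinset (a2 s hs) (a3 s hs)]
    exact ⟨hrs.2, hrs.1⟩

/-- The ascending runs of the canonical word of a ballot. -/
theorem ascRuns_sorted_ballot {l : List (Finset ℕ)} (hne : ∀ B ∈ l, B.Nonempty)
    (ho : Overlapping l) :
    ascRuns ((l.map ((fun B => Finset.sort B (· ≤ ·)))).flatten) = l.map ((fun B => Finset.sort B (· ≤ ·))) := by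
  apply ascRuns_unique
  · intro r hr
    rcases mem_map.1 hr with ⟨B, hB, rfl⟩
    exact sort_ne_nil (hne B hB)
  · intro r hr
    rcases mem_map.1 hr with ⟨B, hB, rfl⟩
    exact sort_chain_lt B
  · rw [chain'_map]
    refine chain'_imp_mem (fun B hB C hC hBC => ?_) ho
    rw [bmax_sort (hne B hB), bmin_sort (hne C hC)]
    omega

/-- The backward map is well defined. -/
theorem backward_mem {n : ℕ} {l : List (Finset ℕ)} (hb : IsBallot (Finset.Icc 1 n) l)
    (ho : Overlapping l) :
    IsPermOf n ((l.map ((fun B => Finset.sort B (· ≤ ·)))).flatten) ∧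
      IsPopStacked n ((l.map ((fun B => Finset.sort B (· ≤ ·)))).flatten) := by
  obtain ⟨hne, hdisj, hun⟩ := hb
  have hnd : ((l.map ((fun B => Finset.sort B (· ≤ ·)))).flatten).Nodup := by
    rw [nodup_flatten]
    constructor
    · intro r hr
      rcases mem_map.1 hr with ⟨B, hB, rfl⟩
      exact Finset.sort_nodup B _
    · rw [pairwise_map]
      exact hdisj.imp fun {a b} h x hx1 hx2 =>
        (Finset.disjoint_left.1 h) (by simpa using hx1) (by simpa using hx2)
  have htf : ((l.map ((fun B => Finset.sort B (· ≤ ·)))).flatten).toFinset = Finset.Icc 1 n := by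
    rw [← foldr_union_toFinset, map_toFinset_sort, hun]
  have hperm : IsPermOf n ((l.map ((fun B => Finset.sort B (· ≤ ·)))).flatten) :=
    List.perm_of_nodup_nodup_toFinset_eq hnd (List.nodup_range')
      (by rw [htf, toFinset_range'])
  have hch : (ascRuns ((l.map ((fun B => Finset.sort B (· ≤ ·)))).flatten)).Chain'
      fun r s => r.head! < s.getLast! := by
    rw [ascRuns_sorted_ballot hne ho, chain'_map]
    refine chain'_imp_mem (fun B hB C hC hBC => ?_) ho
    rw [bmin_sort (hne B hB), bmax_sort (hne C hC)]
    omega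
  obtain ⟨π, hπ1, hπ2⟩ := popStacked_of_chain _ hch
  exact ⟨hperm, π, hπ1.trans hperm, hπ2⟩

theorem left_inv_aux {σ : List ℕ} :
    (((ascRuns σ).map List.toFinset).map ((fun B => Finset.sort B (· ≤ ·)))).flatten = σ := by
  obtain ⟨a1, a2, a3, a4⟩ := ascRuns_spec σ
  rw [map_map]
  have : (ascRuns σ).map ((fun B => Finset.sort B (· ≤ ·)) ∘ List.toFinset) = ascRuns σ := by
    apply map_congr_left ?_ |>.trans (map_id _)
    intro r hr
    have hp : r.Pairwise (· < ·) := chain'_iff_pairwise.1 (a3 r hr)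
    have : r.Nodup := hp.imp fun {a b} h => ne_of_lt h
    exact (List.toFinset_sort (· ≤ ·) this).2 (hp.imp fun {a b} h => le_of_lt h)
  rw [this, a1]

end PopAux

/-- sending a pop-stacked permutation of `[n]` to its sequence of
ascending runs (as sets, in order) is a bijection onto overlapping ballots of `[n]`. -/
theorem statement2 (n : ℕ) :
    ∃ e : {σ : List ℕ // IsPermOf n σ ∧ IsPopStacked n σ} ≃
          {l : List (Finset ℕ) // IsBallot (Finset.Icc 1 n) l ∧ Overlapping l},
      ∀ σ, (e σ : List (Finset ℕ)) = (ascRuns σ.1).map List.toFinset := by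
  refine ⟨{
    toFun := fun σ => ⟨(ascRuns σ.1).map List.toFinset,
      PopAux.forward_mem σ.2.1 σ.2.2⟩
    invFun := fun l => ⟨((l.1).map ((fun B => Finset.sort B (· ≤ ·)))).flatten,
      (PopAux.backward_mem l.2.1 l.2.2).1, (PopAux.backward_mem l.2.1 l.2.2).2⟩
    left_inv := fun σ => Subtype.ext PopAux.left_inv_aux
    right_inv := fun l => Subtype.ext (by
      show ((ascRuns ((l.1.map ((fun B => Finset.sort B (· ≤ ·)))).flatten)).map List.toFinset) = l.1
      rw [PopAux.ascRuns_sorted_ballot l.2.1.1 l.2.2, PopAux.map_toFinset_sort])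
  }, fun σ => rfl⟩
end

section
/- For n ≥ 1 and c ∈ [n], the number of overlapping ballots of [n] whose last block is the singleton {c} equals ∑_{a=1}^{c−1} ∑_{b=c}^{n−1} f_{a,b}(n−1), where f_{a,b}(m) counts overlapping ballots of [m] whose last block B satisfies min B = a and max B = b, together with the boundary case that the single-block ballot contributes 1 exactly when c = 1 and c = n. -/
def upf (c x : ℕ) : ℕ := if c ≤ x then x + 1 else x
def downf (c x : ℕ) : ℕ := if c < x then x - 1 else x


lemma bmin_mem {B : Finset ℕ} (h : B.Nonempty) : bmin B ∈ B := by
  have := Nat.sInf_mem (s := (B : Set ℕ)) (by exact_mod_cast h.to_set)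
  exact_mod_cast this

lemma bmin_le {B : Finset ℕ} {x : ℕ} (hx : x ∈ B) : bmin B ≤ x :=
  Nat.sInf_le (by exact_mod_cast hx)

lemma le_bmax {B : Finset ℕ} {x : ℕ} (hx : x ∈ B) : x ≤ bmax B :=
  Finset.le_sup (f := id) hx

lemma bmax_mem {B : Finset ℕ} (h : B.Nonempty) : bmax B ∈ B := by
  obtain ⟨b, hb, he⟩ := Finset.exists_mem_eq_sup B h id
  rw [bmax, he]; exact hb

lemma bmin_empty : bmin ∅ = 0 := by simp [bmin]
lemma bmax_empty : bmax ∅ = 0 := by simp [bmax]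
lemma bmin_singleton (c : ℕ) : bmin {c} = c := by simp [bmin]
lemma bmax_singleton (c : ℕ) : bmax {c} = c := by simp [bmax]

lemma bmin_image {f : ℕ → ℕ} (hf : Monotone f) (hf0 : f 0 = 0) (B : Finset ℕ) :
    bmin (B.image f) = f (bmin B) := by
  rcases B.eq_empty_or_nonempty with h | h
  · simp [h, bmin_empty, hf0]
  · apply le_antisymm
    · exact bmin_le (Finset.mem_image_of_mem f (bmin_mem h))
    · have := bmin_mem (h.image f)
      obtain ⟨x, hx, he⟩ := Finset.mem_image.mp this
      rw [← he]; exact hf (bmin_le hx)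

lemma bmax_image {f : ℕ → ℕ} (hf : Monotone f) (hf0 : f 0 = 0) (B : Finset ℕ) :
    bmax (B.image f) = f (bmax B) := by
  rcases B.eq_empty_or_nonempty with h | h
  · simp [h, bmax_empty, hf0]
  · apply le_antisymm
    · have := bmax_mem (h.image f)
      obtain ⟨x, hx, he⟩ := Finset.mem_image.mp this
      rw [← he]; exact hf (le_bmax hx)
    · exact le_bmax (Finset.mem_image_of_mem f (bmax_mem h))

lemma upf_strictMono (c : ℕ) : StrictMono (upf c) := by
  intro x y h; simp only [upf]; split_ifs <;> omega

lemma upf_mono (c : ℕ) : Monotone (upf c) := (upf_strictMono c).monotone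

lemma downf_mono (c : ℕ) : Monotone (downf c) := by
  intro x y h; simp only [downf]; split_ifs <;> omega

lemma upf_zero {c : ℕ} (hc : 1 ≤ c) : upf c 0 = 0 := by simp [upf]; omega
lemma downf_zero (c : ℕ) : downf c 0 = 0 := by simp [downf]

lemma downf_upf (c x : ℕ) : downf c (upf c x) = x := by
  simp only [upf, downf]; split_ifs <;> omega

lemma upf_downf {c x : ℕ} (h : x ≠ c) : upf c (downf c x) = x := by
  simp only [upf, downf]; split_ifs <;> omega

lemma upf_ne (c x : ℕ) : upf c x ≠ c := by simp only [upf]; split_ifs <;> omega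

lemma upf_inj (c : ℕ) : Function.Injective (upf c) := (upf_strictMono c).injective

lemma image_downf_upf (c : ℕ) (B : Finset ℕ) :
    (B.image (upf c)).image (downf c) = B := by
  rw [Finset.image_image]
  have : downf c ∘ upf c = id := funext fun x => downf_upf c x
  rw [this, Finset.image_id]

lemma foldr_union_subset {B : Finset ℕ} {l : List (Finset ℕ)} (h : B ∈ l) :
    B ⊆ l.foldr (· ∪ ·) ∅ := by
  induction l with
  | nil => simp at h
  | cons C t ih =>
    rcases List.mem_cons.mp h with rfl | h
    · exact Finset.subset_union_left
    · exact (ih h).trans Finset.subset_union_right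

lemma foldr_union_map_image (f : ℕ → ℕ) (l : List (Finset ℕ)) :
    (l.map (Finset.image f)).foldr (· ∪ ·) ∅ = Finset.image f (l.foldr (· ∪ ·) ∅) := by
  induction l with
  | nil => simp
  | cons C t ih => simp [ih, Finset.image_union]

lemma disjoint_foldr_union {s : Finset ℕ} {l : List (Finset ℕ)}
    (h : ∀ B ∈ l, Disjoint s B) : Disjoint s (l.foldr (· ∪ ·) ∅) := by
  induction l with
  | nil => simp
  | cons C t ih =>
    simp only [List.foldr_cons, Finset.disjoint_union_right]
    exact ⟨h C (by simp), ih fun B hB => h B (by simp [hB])⟩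

lemma foldr_union_append (l : List (Finset ℕ)) (B : Finset ℕ) :
    (l ++ [B]).foldr (· ∪ ·) ∅ = l.foldr (· ∪ ·) ∅ ∪ B := by
  induction l with
  | nil => simp
  | cons C t ih => simp [ih, Finset.union_assoc]

lemma image_upf_downf {c : ℕ} {B : Finset ℕ} (h : c ∉ B) :
    (B.image (downf c)).image (upf c) = B := by
  rw [Finset.image_image]
  apply Finset.ext; intro x
  simp only [Finset.mem_image, Function.comp_apply]
  constructor
  · rintro ⟨y, hy, rfl⟩
    rw [upf_downf (show y ≠ c from fun he => h (he ▸ hy))]; exact hy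
  · intro hx
    exact ⟨x, hx, upf_downf (show x ≠ c from fun he => h (he ▸ hx))⟩

lemma overlapping_map_upf {c : ℕ} (hc : 1 ≤ c) (l : List (Finset ℕ)) :
    Overlapping (l.map (Finset.image (upf c))) ↔ Overlapping l := by
  rw [Overlapping, Overlapping, List.Chain', List.Chain', List.isChain_map]
  have key : ∀ B C : Finset ℕ,
      (bmin (C.image (upf c)) < bmax (B.image (upf c)) ∧
        bmin (B.image (upf c)) < bmax (C.image (upf c))) ↔
      (bmin C < bmax B ∧ bmin B < bmax C) := by
    intro B C
    rw [bmin_image (upf_mono c) (upf_zero hc), bmax_image (upf_mono c) (upf_zero hc),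
      bmin_image (upf_mono c) (upf_zero hc), bmax_image (upf_mono c) (upf_zero hc),
      (upf_strictMono c).lt_iff_lt, (upf_strictMono c).lt_iff_lt]
  constructor
  · exact fun h => h.imp fun {B C} hp => (key B C).mp hp
  · exact fun h => h.imp fun {B C} hp => (key B C).mpr hp

lemma image_upf_Icc {c m : ℕ} (hc : 1 ≤ c) (hcm : c ≤ m + 1) :
    (Finset.Icc 1 m).image (upf c) = Finset.Icc 1 (m + 1) \ {c} := by
  apply Finset.ext; intro x
  simp only [Finset.mem_image, Finset.mem_sdiff, Finset.mem_Icc, Finset.mem_singleton]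
  constructor
  · rintro ⟨y, hy, rfl⟩
    simp only [upf]; split_ifs <;> omega
  · rintro ⟨⟨h1, h2⟩, hne⟩
    by_cases hlt : x < c
    · exact ⟨x, by omega, by simp [upf]; omega⟩
    · exact ⟨x - 1, by omega, by simp only [upf]; split_ifs <;> omega⟩

lemma ballot_length_le {U : Finset ℕ} {l : List (Finset ℕ)} (h : IsBallot U l) :
    l.length ≤ U.card := by
  obtain ⟨hne, hdisj, hun⟩ := h
  subst hun
  induction l with
  | nil => simp
  | cons B t ih =>
    have hd : Disjoint B (t.foldr (· ∪ ·) ∅) :=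
      disjoint_foldr_union fun C hC => (List.pairwise_cons.mp hdisj).1 C hC
    have hcard : (List.foldr (· ∪ ·) ∅ (B :: t)).card
        = B.card + (t.foldr (· ∪ ·) ∅).card := by
      simp only [List.foldr_cons]
      exact Finset.card_union_of_disjoint hd
    have hB : 1 ≤ B.card := Finset.card_pos.mpr (hne B (by simp))
    have := ih (fun C hC => hne C (by simp [hC])) (List.pairwise_cons.mp hdisj).2
    simp only [List.length_cons, hcard]
    omega

lemma ballot_finite (U : Finset ℕ) : {l : List (Finset ℕ) | IsBallot U l}.Finite := by
  have h1 : {l : List ↥U.powerset | l.length ≤ U.card}.Finite :=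
    List.finite_length_le _ _
  apply Set.Finite.subset (h1.image (List.map Subtype.val))
  intro l hl
  simp only [Set.mem_setOf_eq] at hl
  have hsub : ∀ B ∈ l, B ∈ U.powerset := by
    intro B hB
    rw [Finset.mem_powerset, ← hl.2.2]
    exact foldr_union_subset hB
  refine ⟨l.attach.map fun B => ⟨B.1, hsub B.1 B.2⟩, ?_, ?_⟩
  · simp only [Set.mem_setOf_eq, List.length_map, List.length_attach]
    exact ballot_length_le hl
  · simp [List.map_map, Function.comp]

lemma image_upf_inj (c : ℕ) : Function.Injective (Finset.image (upf c)) := by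
  intro s t h
  have := congrArg (Finset.image (downf c)) h
  rwa [image_downf_upf, image_downf_upf] at this

lemma card_S_eq_card_T {m c : ℕ} (hm : 1 ≤ m) (hc : 1 ≤ c) (hcm : c ≤ m + 1) :
    Nat.card {l : List (Finset ℕ) // IsBallot (Finset.Icc 1 (m+1)) l ∧ Overlapping l ∧
        l.getLast? = some ({c} : Finset ℕ)} =
    Nat.card {l : List (Finset ℕ) // IsBallot (Finset.Icc 1 m) l ∧ Overlapping l ∧
        ∃ B, l.getLast? = some B ∧ (1 ≤ bmin B ∧ bmin B ≤ c - 1) ∧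
          (c ≤ bmax B ∧ bmax B ≤ m)} := by
  symm
  have gmem : ∀ l : List (Finset ℕ), (IsBallot (Finset.Icc 1 m) l ∧ Overlapping l ∧
      ∃ B, l.getLast? = some B ∧ (1 ≤ bmin B ∧ bmin B ≤ c - 1) ∧
        (c ≤ bmax B ∧ bmax B ≤ m)) →
      (IsBallot (Finset.Icc 1 (m+1)) (l.map (Finset.image (upf c)) ++ [({c} : Finset ℕ)]) ∧
        Overlapping (l.map (Finset.image (upf c)) ++ [({c} : Finset ℕ)]) ∧
        (l.map (Finset.image (upf c)) ++ [({c} : Finset ℕ)]).getLast? = some ({c} : Finset ℕ)) := by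
    rintro l ⟨hball, hov, B, hlast, ⟨ha1, ha2⟩, hb1, hb2⟩
    obtain ⟨hne, hdisj, hun⟩ := hball
    refine ⟨⟨?_, ?_, ?_⟩, ?_, ?_⟩
    · intro C hC
      rcases List.mem_append.mp hC with h | h
      · obtain ⟨D, hD, rfl⟩ := List.mem_map.mp h
        exact (hne D hD).image _
      · simp only [List.mem_singleton] at h
        exact h ▸ Finset.singleton_nonempty c
    · rw [List.pairwise_append]
      refine ⟨?_, by simp, ?_⟩
      · rw [List.pairwise_map]
        exact hdisj.imp fun h => (Finset.disjoint_image (upf_strictMono c).injective).mpr h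
      · intro C hC D hD
        obtain ⟨E, _, rfl⟩ := List.mem_map.mp hC
        simp only [List.mem_singleton] at hD
        subst hD
        rw [Finset.disjoint_singleton_right]
        intro hmem
        obtain ⟨x, _, hx⟩ := Finset.mem_image.mp hmem
        exact upf_ne c x hx
    · rw [foldr_union_append, foldr_union_map_image, hun, image_upf_Icc hc hcm,
        Finset.sdiff_union_of_subset (by simp; omega)]
    · rw [Overlapping, List.Chain', List.isChain_append]
      refine ⟨(overlapping_map_upf hc l).mpr hov, by simp, ?_⟩
      intro x hx y hy
      rw [List.getLast?_map, hlast, Option.map_some] at hx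
      simp only [Option.mem_def, Option.some.injEq] at hx
      simp only [List.head?_cons, Option.mem_def, Option.some.injEq] at hy
      subst hx; subst hy
      rw [bmin_singleton, bmax_singleton,
        bmin_image (upf_mono c) (upf_zero hc), bmax_image (upf_mono c) (upf_zero hc)]
      constructor
      · have : upf c (bmax B) = bmax B + 1 := by simp [upf]; omega
        omega
      · have : upf c (bmin B) = bmin B := by simp [upf]; omega
        omega
    · exact List.getLast?_concat
  apply Nat.card_eq_of_bijective
    (f := fun x => ⟨x.1.map (Finset.image (upf c)) ++ [({c} : Finset ℕ)], gmem x.1 x.2⟩)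
  constructor
  · rintro ⟨l1, h1⟩ ⟨l2, h2⟩ he
    simp only [Subtype.mk.injEq] at he
    have := congrArg List.dropLast he
    rw [List.dropLast_concat, List.dropLast_concat] at this
    exact Subtype.ext (List.map_injective_iff.mpr (image_upf_inj c) this)
  · rintro ⟨l, hball, hov, hlast⟩
    have hlne : l ≠ [] := by rintro rfl; simp at hlast
    have hsplit : l.dropLast ++ [({c} : Finset ℕ)] = l := List.dropLast_append_getLast? _ hlast
    set D := l.dropLast with hD
    have hDne : D ≠ [] := by
      intro h
      rw [h] at hsplit
      obtain ⟨_, _, hun⟩ := hball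
      rw [← hsplit] at hun
      simp at hun
      have h1 : (1:ℕ) ∈ Finset.Icc 1 (m+1) := by simp
      have h2 : (m+1:ℕ) ∈ Finset.Icc 1 (m+1) := by simp
      rw [← hun] at h1 h2
      simp at h1 h2
      omega
    obtain ⟨hne, hdisj, hun⟩ := hball
    rw [← hsplit] at hne hdisj hun hov
    rw [List.pairwise_append] at hdisj
    have hcnot : ∀ B ∈ D, c ∉ B := by
      intro B hB hcB
      have := hdisj.2.2 B hB {c} (by simp)
      rw [Finset.disjoint_singleton_right] at this
      exact this hcB
    have hDne' : ∀ B ∈ D, B.Nonempty := fun B hB => hne B (List.mem_append_left _ hB)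
    -- the preimage
    set l' := D.map (Finset.image (downf c)) with hl'
    have hback : l'.map (Finset.image (upf c)) = D := by
      rw [hl', List.map_map]
      have : D.map (Finset.image (upf c) ∘ Finset.image (downf c)) = D.map id := by
        apply List.map_congr_left
        intro B hB
        exact image_upf_downf (hcnot B hB)
      rw [this, List.map_id]
    -- foldr of D
    have hfoldD : D.foldr (· ∪ ·) ∅ = Finset.Icc 1 (m+1) \ {c} := by
      rw [foldr_union_append] at hun
      have hcno : c ∉ D.foldr (· ∪ ·) ∅ := by
        have : Disjoint ({c} : Finset ℕ) (D.foldr (· ∪ ·) ∅) :=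
          disjoint_foldr_union fun B hB => (Finset.disjoint_singleton_left).mpr (hcnot B hB)
        rw [Finset.disjoint_singleton_left] at this
        exact this
      apply Finset.ext
      intro x
      simp only [Finset.mem_sdiff, Finset.mem_singleton]
      constructor
      · intro hx
        refine ⟨hun ▸ Finset.mem_union_left _ hx, ?_⟩
        rintro rfl; exact hcno hx
      · rintro ⟨hx, hne'⟩
        rcases Finset.mem_union.mp (hun ▸ hx) with h | h
        · exact h
        · simp at h; omega
    have hov' : Overlapping D ∧ Overlapping l' := by
      rw [Overlapping, List.Chain', List.isChain_append] at hov
      have hD' := hov.1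
      exact ⟨hD', (overlapping_map_upf hc l').mp (hback ▸ hD')⟩
    -- junction conditions
    have hjunc : bmin ({c} : Finset ℕ) < bmax (D.getLast hDne) ∧
        bmin (D.getLast hDne) < bmax ({c} : Finset ℕ) := by
      rw [Overlapping, List.Chain', List.isChain_append] at hov
      exact hov.2.2 _ (List.getLast?_eq_getLast_of_ne_nil hDne) _ (by simp)
    rw [bmin_singleton, bmax_singleton] at hjunc
    set BD := D.getLast hDne with hBD
    have hBDmem : BD ∈ D := List.getLast_mem hDne
    have hBDsub : BD ⊆ Finset.Icc 1 (m+1) := by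
      rw [← hun]
      exact foldr_union_subset (List.mem_append_left _ hBDmem)
    have hBDnon : BD.Nonempty := hDne' BD hBDmem
    have hbmin1 : 1 ≤ bmin BD := by
      have := hBDsub (bmin_mem hBDnon); simp at this; omega
    have hbmaxm : bmax BD ≤ m + 1 := by
      have := hBDsub (bmax_mem hBDnon); simp at this; omega
    refine ⟨⟨l', ⟨?_, ?_, ?_⟩, hov'.2, BD.image (downf c), ?_, ?_, ?_⟩, ?_⟩
    · intro B hB
      obtain ⟨E, hE, rfl⟩ := List.mem_map.mp hB
      exact (hDne' E hE).image _
    · rw [hl', List.pairwise_map]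
      apply hdisj.1.imp_of_mem
      intro B C hB hC hBC
      rw [← Finset.disjoint_image (upf_strictMono c).injective,
        image_upf_downf (hcnot B hB), image_upf_downf (hcnot C hC)]
      exact hBC
    · rw [hl', foldr_union_map_image, hfoldD, ← image_upf_Icc hc hcm, image_downf_upf]
    · rw [hl', List.getLast?_map, List.getLast?_eq_getLast_of_ne_nil hDne, Option.map_some]
    · rw [bmin_image (downf_mono c) (downf_zero c)]
      have : downf c (bmin BD) = bmin BD := by simp [downf]; omega
      omega
    · rw [bmax_image (downf_mono c) (downf_zero c)]
      have : downf c (bmax BD) = bmax BD - 1 := by simp [downf]; omega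
      omega
    · apply Subtype.ext
      simp only
      rw [hback, hsplit]

open Classical in
lemma card_pred (U : Finset ℕ) (Q : List (Finset ℕ) → Prop) [DecidablePred Q] :
    Nat.card {l : List (Finset ℕ) // IsBallot U l ∧ Q l} =
      ((ballot_finite U).toFinset.filter Q).card := by
  rw [← Set.ncard_coe_finset, ← Nat.card_coe_set_eq]
  apply Nat.card_congr
  apply Equiv.setCongr
  ext l
  simp only [Set.mem_setOf_eq, Finset.coe_filter, Set.Finite.mem_toFinset]
  exact Iff.rfl

open Classical in
lemma card_T_eq_sum {m c : ℕ} :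
    Nat.card {l : List (Finset ℕ) // IsBallot (Finset.Icc 1 m) l ∧ Overlapping l ∧
        ∃ B, l.getLast? = some B ∧ (1 ≤ bmin B ∧ bmin B ≤ c - 1) ∧
          (c ≤ bmax B ∧ bmax B ≤ m)} =
    ∑ a ∈ Finset.Icc 1 (c-1), ∑ b ∈ Finset.Icc c m, fcd a b m := by
  rw [card_pred]
  have hfib : (Finset.filter (fun l => Overlapping l ∧
      ∃ B, l.getLast? = some B ∧ (1 ≤ bmin B ∧ bmin B ≤ c - 1) ∧
        (c ≤ bmax B ∧ bmax B ≤ m)) (ballot_finite (Finset.Icc 1 m)).toFinset).card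
      = ∑ p ∈ Finset.Icc 1 (c-1) ×ˢ Finset.Icc c m,
          ((Finset.filter (fun l => Overlapping l ∧
            ∃ B, l.getLast? = some B ∧ (1 ≤ bmin B ∧ bmin B ≤ c - 1) ∧
              (c ≤ bmax B ∧ bmax B ≤ m)) (ballot_finite (Finset.Icc 1 m)).toFinset).filter
            (fun l => (bmin ((l.getLast?).getD ∅), bmax ((l.getLast?).getD ∅)) = p)).card := by
    apply Finset.card_eq_sum_card_fiberwise
    intro l hl
    simp only [Finset.mem_coe, Finset.mem_filter] at hl
    obtain ⟨_, _, B, hB, ⟨h1, h2⟩, h3, h4⟩ := hl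
    beta_reduce
    rw [hB]
    simp only [Option.getD_some, Finset.mem_coe, Finset.mem_product, Finset.mem_Icc]
    omega
  refine hfib.trans ?_
  rw [Finset.sum_product]
  apply Finset.sum_congr rfl
  intro a ha
  apply Finset.sum_congr rfl
  intro b hb
  simp only [Finset.mem_Icc] at ha hb
  rw [fcd, card_pred]
  congr 1
  rw [Finset.filter_filter]
  apply Finset.filter_congr
  intro l _
  constructor
  · rintro ⟨⟨hov, B, hB, _⟩, hfib⟩
    rw [hB] at hfib
    simp only [Option.getD_some, Prod.mk.injEq] at hfib
    exact ⟨hov, B, hB, hfib.1, hfib.2⟩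
  · rintro ⟨hov, B, hB, hbm, hbx⟩
    refine ⟨⟨hov, B, hB, ⟨by omega, by omega⟩, ⟨by omega, by omega⟩⟩, ?_⟩
    rw [hB]
    simp only [Option.getD_some]
    rw [hbm, hbx]

lemma base_case :
    Nat.card {l : List (Finset ℕ) // IsBallot (Finset.Icc 1 1) l ∧ Overlapping l ∧
        l.getLast? = some ({1} : Finset ℕ)} = 1 := by
  have hIcc : Finset.Icc 1 1 = ({1} : Finset ℕ) := by rfl
  have huniq : ∀ l : List (Finset ℕ), IsBallot (Finset.Icc 1 1) l → l = [{1}] := by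
    rintro l ⟨hne, hdisj, hun⟩
    match l with
    | [] =>
      exfalso
      have h1 : (1:ℕ) ∈ Finset.Icc 1 1 := by simp
      rw [← hun] at h1
      simp at h1
    | B :: t =>
      have hB : B = {1} := by
        have hsub : B ⊆ Finset.Icc 1 1 := hun ▸ foldr_union_subset (by simp)
        rcases Finset.subset_singleton_iff.mp (hIcc ▸ hsub) with h | h
        · exact absurd h (Finset.nonempty_iff_ne_empty.mp (hne B (by simp)))
        · exact h
      match t with
      | [] => rw [hB]
      | C :: t' =>
        have hC : C = {1} := by
          have hsub : C ⊆ Finset.Icc 1 1 := hun ▸ foldr_union_subset (by simp)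
          rcases Finset.subset_singleton_iff.mp (hIcc ▸ hsub) with h | h
          · exact absurd h (Finset.nonempty_iff_ne_empty.mp (hne C (by simp)))
          · exact h
        have := (List.pairwise_cons.mp hdisj).1 C (by simp)
        rw [hB, hC] at this
        simp at this
  rw [Nat.card_eq_one_iff_unique]
  constructor
  · constructor
    rintro ⟨l1, h1, _, _⟩ ⟨l2, h2, _, _⟩
    exact Subtype.ext ((huniq l1 h1).trans (huniq l2 h2).symm)
  · refine ⟨[{1}], ⟨?_, ?_, ?_⟩, ?_, ?_⟩
    · intro B hB; simp at hB; subst hB; exact Finset.singleton_nonempty 1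
    · simp
    · simp [hIcc]
    · simp [Overlapping, List.Chain']
    · rfl

/-- counting overlapping ballots of `[n]` whose last block is `{c}`. -/
theorem statement5 (n c : ℕ) (hn : 1 ≤ n) (hc : 1 ≤ c) (hcn : c ≤ n) :
    Nat.card {l : List (Finset ℕ) // IsBallot (Finset.Icc 1 n) l ∧ Overlapping l ∧
        l.getLast? = some ({c} : Finset ℕ)} =
      (if c = 1 ∧ c = n then 1 else 0) +
        ∑ a ∈ Finset.Icc 1 (c - 1), ∑ b ∈ Finset.Icc c (n - 1), fcd a b (n - 1) := by
  match n, hn with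
  | 1, _ =>
    have hc1 : c = 1 := by omega
    subst hc1
    rw [if_pos ⟨rfl, rfl⟩, base_case,
      show (1:ℕ) - 1 = 0 from rfl, Finset.Icc_eq_empty_of_lt (by omega)]
    simp
  | (m+1), _ =>
    by_cases hm : m = 0
    · subst hm
      have hc1 : c = 1 := by omega
      subst hc1
      rw [if_pos ⟨rfl, rfl⟩, base_case,
        show (1:ℕ) - 1 = 0 from rfl, Finset.Icc_eq_empty_of_lt (by omega)]
      simp
    · have hm1 : 1 ≤ m := by omega
      rw [if_neg (by omega)]
      rw [card_S_eq_card_T hm1 hc hcn, card_T_eq_sum]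
      simp
end

section
/- Let f_{c,d}(n) denote the number of overlapping ballots of [n] whose last block B satisfies min B = c and max B = d. Then for all 1 ≤ c ≤ d ≤ n: f_{c,d}(n) = [c = 1 ∧ d = n] + [c = d]·∑_{a=1}^{c−1}∑_{b=c}^{n} f_{a,b}(n−1) + [c < d]·∑_{ℓ=0}^{d−c−1} C(d−c−1, ℓ) ∑_{a=1}^{d−ℓ−2} ∑_{b=c}^{n−ℓ−2} f_{a,b}(n−ℓ−2), where [p] is 1 if p holds and 0 otherwise and C(·,·) is the binomial coefficient. Moreover f_{c,d}(n) = 0 when c > d. -/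
namespace St6


theorem bmin_mem {B : Finset ℕ} (h : B.Nonempty) : bmin B ∈ B := by
  have : (B : Set ℕ).Nonempty := by exact_mod_cast h
  exact_mod_cast Nat.sInf_mem this

theorem bmin_le {B : Finset ℕ} {x : ℕ} (h : x ∈ B) : bmin B ≤ x :=
  Nat.sInf_le (by exact_mod_cast h)

theorem le_bmax {B : Finset ℕ} {x : ℕ} (h : x ∈ B) : x ≤ bmax B :=
  Finset.le_sup (f := id) h

theorem bmax_mem {B : Finset ℕ} (h : B.Nonempty) : bmax B ∈ B := by
  obtain ⟨x, hx, he⟩ := Finset.exists_mem_eq_sup B h id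
  rw [bmax, he]; exact hx

theorem bmin_le_bmax {B : Finset ℕ} (h : B.Nonempty) : bmin B ≤ bmax B :=
  le_trans (bmin_le (bmax_mem h)) le_rfl

theorem bmin_empty : bmin ∅ = 0 := by simp [bmin, Nat.sInf_empty]

theorem bmin_Icc {n : ℕ} (hn : 1 ≤ n) : bmin (Finset.Icc 1 n) = 1 := by
  refine le_antisymm (bmin_le (by simp [hn])) ?_
  have := bmin_mem (B := Finset.Icc 1 n) ⟨1, by simp [hn]⟩
  simp only [Finset.mem_Icc] at this
  exact this.1

theorem bmax_Icc {n : ℕ} (hn : 1 ≤ n) : bmax (Finset.Icc 1 n) = n := by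
  refine le_antisymm ?_ (le_bmax (by simp [hn]))
  have := bmax_mem (B := Finset.Icc 1 n) ⟨1, by simp [hn]⟩
  simp only [Finset.mem_Icc] at this
  exact this.2

theorem subset_Icc_of_minmax {B : Finset ℕ} {c d : ℕ} (h1 : bmin B = c) (h2 : bmax B = d) :
    B ⊆ Finset.Icc c d := fun x hx => by
  simp only [Finset.mem_Icc]
  exact ⟨h1 ▸ bmin_le hx, h2 ▸ le_bmax hx⟩

/-- image under a strictly monotone map -/
theorem bmin_image {E : ℕ → ℕ} {S C : Finset ℕ}
    (hmono : ∀ x ∈ S, ∀ y ∈ S, x < y → E x < E y)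
    (hCS : C ⊆ S) (hC : C.Nonempty) : bmin (C.image E) = E (bmin C) := by
  refine le_antisymm (bmin_le (Finset.mem_image_of_mem _ (bmin_mem hC))) ?_
  have h := bmin_mem (hC.image E)
  obtain ⟨x, hx, he⟩ := Finset.mem_image.1 h
  rw [← he]
  rcases lt_or_eq_of_le (bmin_le hx) with h' | h'
  · exact le_of_lt (hmono _ (hCS (bmin_mem hC)) _ (hCS hx) h')
  · rw [h']

theorem bmax_image {E : ℕ → ℕ} {S C : Finset ℕ}
    (hmono : ∀ x ∈ S, ∀ y ∈ S, x < y → E x < E y)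
    (hCS : C ⊆ S) (hC : C.Nonempty) : bmax (C.image E) = E (bmax C) := by
  refine le_antisymm ?_ (le_bmax (Finset.mem_image_of_mem _ (bmax_mem hC)))
  have h := bmax_mem (hC.image E)
  obtain ⟨x, hx, he⟩ := Finset.mem_image.1 h
  rw [← he]
  rcases lt_or_eq_of_le (le_bmax hx) with h' | h'
  · exact le_of_lt (hmono _ (hCS hx) _ (hCS (bmax_mem hC)) h')
  · rw [h']

/-- Chain' congruence for predicates agreeing on members. -/
theorem chain'_congr {α : Type*} {R R' : α → α → Prop} :
    ∀ {l : List α}, (∀ a ∈ l, ∀ b ∈ l, (R a b ↔ R' a b)) →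
      (l.Chain' R ↔ l.Chain' R')
  | [], _ => by simp [List.Chain']
  | [a], _ => by simp [List.Chain']
  | a :: b :: t, h => by
    simp only [List.Chain', List.isChain_cons_cons]
    constructor
    · rintro ⟨h1, h2⟩
      refine ⟨(h a (by simp) b (by simp)).1 h1, (chain'_congr ?_).1 h2⟩
      intro x hx y hy; exact h x (by simp [hx]) y (by simp [hy]) -- membership in tail
    · rintro ⟨h1, h2⟩
      refine ⟨(h a (by simp) b (by simp)).2 h1, (chain'_congr ?_).2 h2⟩
      intro x hx y hy; exact h x (by simp [hx]) y (by simp [hy])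

/-- Nat.card of a sigma over a finset. -/
theorem nat_card_sigma {ι : Type*} (s : Finset ι) (f : ι → Type*) [∀ i : s, Finite (f i)] :
    Nat.card (Σ i : s, f i) = ∑ i ∈ s, Nat.card (f i) := by
  classical
  letI : ∀ i : s, Fintype (f i) := fun i => Fintype.ofFinite _
  rw [Nat.card_eq_fintype_card, Fintype.card_sigma, Finset.univ_eq_attach,
    ← Finset.sum_attach s (fun i => Nat.card (f i))]
  exact Finset.sum_congr rfl fun i _ => (Nat.card_eq_fintype_card (α := f i)).symm

/-- Partition a Nat.card count by the value of a function into a finset. -/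
theorem card_partition {α ι : Type*} {P : α → Prop} [Finite {x : α // P x}]
    (s : Finset ι) (f : α → ι) (hf : ∀ x, P x → f x ∈ s) :
    Nat.card {x : α // P x} = ∑ i ∈ s, Nat.card {x : α // P x ∧ f x = i} := by
  classical
  haveI : ∀ i : s, Finite {x : α // P x ∧ f x = (i : ι)} := fun i =>
    Finite.of_injective (fun x => (⟨x.1, x.2.1⟩ : {x : α // P x}))
      (fun a b h => Subtype.ext (congrArg Subtype.val h : _))
  rw [← nat_card_sigma s (fun i => {x : α // P x ∧ f x = i})]
  apply Nat.card_congr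
  exact {
    toFun := fun x => ⟨⟨f x.1, hf x.1 x.2⟩, ⟨x.1, x.2, rfl⟩⟩
    invFun := fun y => ⟨y.2.1, y.2.2.1⟩
    left_inv := fun x => rfl
    right_inv := fun y => by
      obtain ⟨⟨i, hi⟩, x, hx, hfx⟩ := y
      dsimp only at hfx
      subst hfx
      rfl }

/-- Split a Nat.card by a predicate. -/
theorem card_split {α : Type*} {P Q : α → Prop} [Finite {x : α // P x}] :
    Nat.card {x : α // P x} =
      Nat.card {x : α // P x ∧ Q x} + Nat.card {x : α // P x ∧ ¬ Q x} := by
  classical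
  haveI h1 : Finite {x : α // P x ∧ Q x} :=
    Finite.of_injective (fun x => (⟨x.1, x.2.1⟩ : {x : α // P x}))
      (fun a b h => Subtype.ext (congrArg Subtype.val h : _))
  haveI h2 : Finite {x : α // P x ∧ ¬ Q x} :=
    Finite.of_injective (fun x => (⟨x.1, x.2.1⟩ : {x : α // P x}))
      (fun a b h => Subtype.ext (congrArg Subtype.val h : _))
  rw [← Nat.card_sum]
  apply Nat.card_congr
  exact {
    toFun := fun x => if h : Q x.1 then Sum.inl ⟨x.1, x.2, h⟩ else Sum.inr ⟨x.1, x.2, h⟩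
    invFun := fun y => y.elim (fun x => ⟨x.1, x.2.1⟩) (fun x => ⟨x.1, x.2.1⟩)
    left_inv := fun x => by by_cases h : Q x.1 <;> simp [h]
    right_inv := fun y => by
      rcases y with ⟨x, hx, hq⟩ | ⟨x, hx, hq⟩ <;> simp [hq] }



theorem subset_foldr {l : List (Finset ℕ)} {B : Finset ℕ} (h : B ∈ l) :
    B ⊆ l.foldr (· ∪ ·) ∅ := by
  induction l with
  | nil => simp at h
  | cons C t ih =>
    rcases List.mem_cons.1 h with rfl | h'
    · exact Finset.subset_union_left
    · exact (ih h').trans Finset.subset_union_right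

theorem disjoint_foldr {l : List (Finset ℕ)} {B : Finset ℕ}
    (h : ∀ C ∈ l, Disjoint C B) : Disjoint (l.foldr (· ∪ ·) ∅) B := by
  induction l with
  | nil => simp
  | cons C t ih =>
    simp only [List.foldr_cons, Finset.disjoint_union_left]
    exact ⟨h C (by simp), ih (fun D hD => h D (by simp [hD]))⟩

theorem ballot_block_subset {U : Finset ℕ} {l : List (Finset ℕ)} (hl : IsBallot U l)
    {B : Finset ℕ} (hB : B ∈ l) : B ⊆ U := hl.2.2 ▸ subset_foldr hB

theorem ballot_length {U : Finset ℕ} {l : List (Finset ℕ)} (hl : IsBallot U l) :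
    l.length ≤ U.card := by
  induction l generalizing U with
  | nil => simp
  | cons B t ih =>
    obtain ⟨hne, hpw, hun⟩ := hl
    simp only [List.foldr_cons] at hun
    have hdisj : Disjoint B (t.foldr (· ∪ ·) ∅) :=
      (disjoint_foldr (fun C hC => (List.pairwise_cons.1 hpw).1 C hC |>.symm)).symm
    have ht : IsBallot (U \ B) t := by
      refine ⟨fun C hC => hne C (by simp [hC]), (List.pairwise_cons.1 hpw).2, ?_⟩
      rw [← hun, Finset.union_sdiff_cancel_left hdisj]
    have hBU : B ⊆ U := by rw [← hun]; exact Finset.subset_union_left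
    have h1 : 1 ≤ B.card := Finset.card_pos.2 (hne B (by simp))
    have := ih ht
    rw [Finset.card_sdiff_of_subset hBU] at this
    have hcard := Finset.card_le_card hBU
    simp only [List.length_cons]
    omega

theorem ballot_ne_nil {n : ℕ} {l : List (Finset ℕ)} (hl : IsBallot (Finset.Icc 1 n) l)
    (hn : 1 ≤ n) : l ≠ [] := by
  intro h
  subst h
  have := hl.2.2
  simp only [List.foldr_nil] at this
  have : (1 : ℕ) ∈ (∅ : Finset ℕ) := this ▸ (by simp [hn])
  simp at this

/-- Finiteness of constrained ballots. -/
theorem finite_ballots (U : Finset ℕ) (q : List (Finset ℕ) → Prop) :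
    Finite {l : List (Finset ℕ) // IsBallot U l ∧ q l} := by
  classical
  set N := U.card with hN
  apply Finite.of_injective
    (fun x : {l : List (Finset ℕ) // IsBallot U l ∧ q l} =>
      (fun i : Fin (N + 1) => (⟨x.1.getD i ∅, by
        simp only [Finset.mem_powerset]
        by_cases h : (i : ℕ) < x.1.length
        · rw [List.getD_eq_getElem _ _ h]
          exact ballot_block_subset x.2.1 (List.getElem_mem h)
        · rw [List.getD_eq_default _ _ (not_lt.1 h)]
          exact Finset.empty_subset U⟩ : U.powerset)))
  intro a b hab
  have key : ∀ i : Fin (N + 1), a.1.getD i ∅ = b.1.getD i ∅ := fun i =>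
    congrArg Subtype.val (congrFun hab i)
  have hla : a.1.length ≤ N := ballot_length a.2.1
  have hlb : b.1.length ≤ N := ballot_length b.2.1
  have hne : ∀ (l : List (Finset ℕ)), IsBallot U l → ∀ i, i < l.length → l.getD i ∅ ≠ ∅ := by
    intro l hl i hi
    rw [List.getD_eq_getElem _ _ hi]
    exact (hl.1 _ (List.getElem_mem hi)).ne_empty
  have hlen : a.1.length = b.1.length := by
    by_contra hne'
    rcases Nat.lt_or_ge a.1.length b.1.length with h | h
    · have h1 := key ⟨a.1.length, by omega⟩
      rw [List.getD_eq_default _ _ (le_refl _)] at h1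
      exact hne b.1 b.2.1 a.1.length h h1.symm
    · have h' : b.1.length < a.1.length := lt_of_le_of_ne h (Ne.symm hne')
      have h1 := key ⟨b.1.length, by omega⟩
      rw [List.getD_eq_default b.1 _ (le_refl _)] at h1
      exact hne a.1 a.2.1 b.1.length h' h1
  apply Subtype.ext
  apply List.ext_getElem hlen
  intro i h1 h2
  have := key ⟨i, by omega⟩
  rwa [List.getD_eq_getElem _ _ h1, List.getD_eq_getElem _ _ h2] at this

theorem finite_of_imp {p : List (Finset ℕ) → Prop} {U : Finset ℕ}
    (h : ∀ l, p l → IsBallot U l) : Finite {l : List (Finset ℕ) // p l} := by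
  haveI := finite_ballots U (fun l => p l)
  exact Finite.of_injective
    (fun x : {l // p l} => (⟨x.1, h x.1 x.2, x.2⟩ : {l // IsBallot U l ∧ p l}))
    (fun a b hab => Subtype.ext (congrArg Subtype.val hab : _))

theorem foldr_init (l : List (Finset ℕ)) (A : Finset ℕ) :
    l.foldr (· ∪ ·) A = l.foldr (· ∪ ·) ∅ ∪ A := by
  induction l with
  | nil => simp
  | cons C t ih => simp only [List.foldr_cons, ih, Finset.union_assoc]

theorem foldr_concat (l : List (Finset ℕ)) (B : Finset ℕ) :
    (l ++ [B]).foldr (· ∪ ·) ∅ = l.foldr (· ∪ ·) ∅ ∪ B := by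
  rw [List.foldr_append, List.foldr_cons, List.foldr_nil, Finset.union_empty, foldr_init]

theorem isBallot_concat {U B : Finset ℕ} {l : List (Finset ℕ)} :
    IsBallot U (l ++ [B]) ↔ IsBallot (U \ B) l ∧ B ⊆ U ∧ B.Nonempty := by
  constructor
  · rintro ⟨hne, hpw, hun⟩
    have hBl : ∀ C ∈ l, Disjoint C B := by
      intro C hC
      exact List.pairwise_append.1 hpw |>.2.2 C hC B (by simp)
    rw [foldr_concat] at hun
    have hdisj : Disjoint (l.foldr (· ∪ ·) ∅) B := disjoint_foldr hBl
    have hfl : l.foldr (· ∪ ·) ∅ = U \ B := by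
      rw [← hun, Finset.union_sdiff_cancel_right hdisj]
    refine ⟨⟨fun C hC => hne C (by simp [hC]), (List.pairwise_append.1 hpw).1, hfl⟩,
      ?_, hne B (by simp)⟩
    rw [← hun]; exact Finset.subset_union_right
  · rintro ⟨⟨hne, hpw, hun⟩, hBU, hBne⟩
    have hBl : ∀ C ∈ l, Disjoint C B := by
      intro C hC
      have : C ⊆ U \ B := hun ▸ subset_foldr hC
      exact Finset.disjoint_right.2 fun x hxB hxC =>
        (Finset.mem_sdiff.1 (this hxC)).2 hxB
    refine ⟨fun C hC => ?_, ?_, ?_⟩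
    · rcases List.mem_append.1 hC with h | h
      · exact hne C h
      · simp only [List.mem_singleton] at h; subst h; exact hBne
    · rw [List.pairwise_append]
      exact ⟨hpw, List.pairwise_singleton _ _, fun C hC D hD => by
        simp only [List.mem_singleton] at hD; subst hD; exact hBl C hC⟩
    · rw [foldr_concat, hun, Finset.sdiff_union_of_subset hBU]


section Transport
variable {S T : Finset ℕ} {E : ℕ → ℕ}
variable (hmapsto : ∀ x ∈ S, E x ∈ T)
variable (hmono : ∀ x ∈ S, ∀ y ∈ S, x < y → E x < E y)
variable (hsurj : ∀ y ∈ T, ∃ x ∈ S, E x = y)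

include hmono in
theorem E_inj (x : ℕ) (hx : x ∈ S) (y : ℕ) (hy : y ∈ S) (h : E x = E y) : x = y := by
  rcases lt_trichotomy x y with h' | h' | h'
  · exact absurd h (ne_of_lt (hmono x hx y hy h'))
  · exact h'
  · exact absurd h.symm (ne_of_lt (hmono y hy x hx h'))

open Classical in
noncomputable def Gpre (S : Finset ℕ) (E : ℕ → ℕ) (C : Finset ℕ) : Finset ℕ :=
  S.filter (fun x => E x ∈ C)

include hmono in
theorem Gpre_Fimg {C : Finset ℕ} (hCS : C ⊆ S) : Gpre S E (C.image E) = C := by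
  classical
  ext x
  simp only [Gpre, Finset.mem_filter, Finset.mem_image]
  constructor
  · rintro ⟨hxS, c, hc, hec⟩
    rwa [E_inj hmono x hxS c (hCS hc) hec.symm]
  · intro hx
    exact ⟨hCS hx, x, hx, rfl⟩

include hsurj in
theorem Fimg_Gpre {C : Finset ℕ} (hCT : C ⊆ T) : (Gpre S E C).image E = C := by
  classical
  ext y
  simp only [Gpre, Finset.mem_image, Finset.mem_filter]
  constructor
  · rintro ⟨x, ⟨hxS, hEx⟩, rfl⟩; exact hEx
  · intro hy
    obtain ⟨x, hxS, rfl⟩ := hsurj y (hCT hy)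
    exact ⟨x, ⟨hxS, hy⟩, rfl⟩

theorem Gpre_subset (C : Finset ℕ) : Gpre S E C ⊆ S := Finset.filter_subset _ _

include hsurj in
theorem Gpre_nonempty {C : Finset ℕ} (hCT : C ⊆ T) (hC : C.Nonempty) :
    (Gpre S E C).Nonempty := by
  classical
  obtain ⟨y, hy⟩ := hC
  obtain ⟨x, hxS, rfl⟩ := hsurj y (hCT hy)
  exact ⟨x, Finset.mem_filter.2 ⟨hxS, hy⟩⟩

theorem foldr_image (l : List (Finset ℕ)) :
    (l.map (fun C => C.image E)).foldr (· ∪ ·) ∅ = (l.foldr (· ∪ ·) ∅).image E := by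
  classical
  induction l with
  | nil => simp
  | cons C t ih => simp [Finset.image_union, ih]

theorem foldr_Gpre (l : List (Finset ℕ)) :
    (l.map (Gpre S E)).foldr (· ∪ ·) ∅ = Gpre S E (l.foldr (· ∪ ·) ∅) := by
  classical
  induction l with
  | nil => simp [Gpre]
  | cons C t ih =>
    simp only [List.map_cons, List.foldr_cons, ih]
    ext x
    simp only [Gpre, Finset.mem_union, Finset.mem_filter]
    tauto

include hmapsto hsurj in
theorem image_S : S.image E = T := by
  classical
  have h1 : S.image E ⊆ T := by
    intro y hy
    obtain ⟨x, hx, rfl⟩ := Finset.mem_image.1 hy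
    exact hmapsto x hx
  have h2 : T ⊆ S.image E := by
    intro y hy
    obtain ⟨x, hx, rfl⟩ := hsurj y hy
    exact Finset.mem_image_of_mem _ hx
  exact le_antisymm h1 h2

include hmapsto hmono hsurj in
theorem ballot_image {l : List (Finset ℕ)} (hl : IsBallot S l) :
    IsBallot T (l.map (fun C => C.image E)) := by
  classical
  obtain ⟨hne, hpw, hun⟩ := hl
  refine ⟨?_, ?_, ?_⟩
  · intro B hB
    obtain ⟨C, hC, rfl⟩ := List.mem_map.1 hB
    exact (hne C hC).image E
  · rw [List.pairwise_map]
    refine hpw.imp_of_mem ?_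
    intro C D hC hD hdisj
    rw [Finset.disjoint_left]
    rintro y hyC hyD
    obtain ⟨c, hc, rfl⟩ := Finset.mem_image.1 hyC
    obtain ⟨dd, hd, hde⟩ := Finset.mem_image.1 hyD
    have hcS : c ∈ S := ballot_block_subset ⟨hne, hpw, hun⟩ hC hc
    have hdS : dd ∈ S := ballot_block_subset ⟨hne, hpw, hun⟩ hD hd
    have := E_inj hmono dd hdS c hcS hde
    subst this
    exact Finset.disjoint_left.1 hdisj hc hd
  · rw [foldr_image, hun, image_S hmapsto hsurj]

include hmapsto hsurj in
theorem ballot_Gpre {l : List (Finset ℕ)} (hl : IsBallot T l) :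
    IsBallot S (l.map (Gpre S E)) := by
  classical
  obtain ⟨hne, hpw, hun⟩ := hl
  refine ⟨?_, ?_, ?_⟩
  · intro B hB
    obtain ⟨C, hC, rfl⟩ := List.mem_map.1 hB
    exact Gpre_nonempty hsurj (ballot_block_subset ⟨hne, hpw, hun⟩ hC) (hne C hC)
  · rw [List.pairwise_map]
    refine hpw.imp ?_
    intro C D hdisj
    rw [Finset.disjoint_left]
    rintro x hxC hxD
    simp only [Gpre, Finset.mem_filter] at hxC hxD
    exact Finset.disjoint_left.1 hdisj hxC.2 hxD.2
  · rw [foldr_Gpre, hun]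
    ext x
    simp only [Gpre, Finset.mem_filter]
    exact ⟨fun h => h.1, fun h => ⟨h, hmapsto x h⟩⟩

include hmono in
theorem overlapping_image {l : List (Finset ℕ)} (hl : IsBallot S l) :
    Overlapping (l.map (fun C => C.image E)) ↔ Overlapping l := by
  simp only [Overlapping, List.Chain', List.isChain_map]
  apply chain'_congr
  intro a ha b hb
  have haS : a ⊆ S := ballot_block_subset hl ha
  have hbS : b ⊆ S := ballot_block_subset hl hb
  have hane : a.Nonempty := hl.1 a ha
  have hbne : b.Nonempty := hl.1 b hb
  rw [bmin_image hmono haS hane, bmin_image hmono hbS hbne,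
    bmax_image hmono haS hane, bmax_image hmono hbS hbne]
  constructor
  · rintro ⟨h1, h2⟩
    constructor
    · by_contra h
      push_neg at h
      rcases lt_or_eq_of_le h with h' | h'
      · exact absurd (hmono _ (haS (bmax_mem hane)) _ (hbS (bmin_mem hbne)) h')
          (not_lt.2 (le_of_lt h1))
      · rw [h'] at h1; exact lt_irrefl _ h1
    · by_contra h
      push_neg at h
      rcases lt_or_eq_of_le h with h' | h'
      · exact absurd (hmono _ (hbS (bmax_mem hbne)) _ (haS (bmin_mem hane)) h')
          (not_lt.2 (le_of_lt h2))
      · rw [h'] at h2; exact lt_irrefl _ h2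
  · rintro ⟨h1, h2⟩
    exact ⟨hmono _ (hbS (bmin_mem hbne)) _ (haS (bmax_mem hane)) h1,
      hmono _ (haS (bmin_mem hane)) _ (hbS (bmax_mem hbne)) h2⟩

include hmapsto hmono hsurj in
/-- The transport theorem. -/
theorem transport (p q : Finset ℕ → Prop)
    (hpq : ∀ C, C.Nonempty → C ⊆ S → (p C ↔ q (C.image E))) :
    Nat.card {l : List (Finset ℕ) // IsBallot S l ∧ Overlapping l ∧
      ∃ C, l.getLast? = some C ∧ p C} =
    Nat.card {l : List (Finset ℕ) // IsBallot T l ∧ Overlapping l ∧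
      ∃ C, l.getLast? = some C ∧ q C} := by
  classical
  apply Nat.card_congr
  refine {
    toFun := fun x => ⟨x.1.map (fun C => C.image E), ?_⟩
    invFun := fun y => ⟨y.1.map (Gpre S E), ?_⟩
    left_inv := ?_
    right_inv := ?_ }
  · obtain ⟨l, hbal, hov, C, hlast, hp⟩ := x
    refine ⟨ballot_image hmapsto hmono hsurj hbal,
      (overlapping_image hmono hbal).2 hov, C.image E, ?_, ?_⟩
    · rw [List.getLast?_map, hlast, Option.map_some]
    · have hCl : C ∈ l := List.mem_of_getLast? hlast
      exact (hpq C (hbal.1 C hCl) (ballot_block_subset hbal hCl)).1 hp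
  · obtain ⟨l, hbal, hov, C, hlast, hq⟩ := y
    have hCl : C ∈ l := List.mem_of_getLast? hlast
    have hCT : C ⊆ T := ballot_block_subset hbal hCl
    have hGC : (Gpre S E C).image E = C := Fimg_Gpre hsurj hCT
    have hb' := ballot_Gpre hmapsto hsurj hbal
    have hmapeq : (l.map (Gpre S E)).map (fun C => C.image E) = l := by
      rw [List.map_map]
      conv_rhs => rw [← List.map_id l]
      apply List.map_congr_left
      intro D hDl
      exact Fimg_Gpre hsurj (ballot_block_subset hbal hDl)
    refine ⟨hb', ?_, Gpre S E C, ?_, ?_⟩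
    · have h := overlapping_image hmono hb' (E := E)
      rw [hmapeq] at h
      exact h.1 hov
    · rw [List.getLast?_map, hlast, Option.map_some]
    · rw [hpq _ (Gpre_nonempty hsurj hCT (hbal.1 C hCl)) (Gpre_subset _), hGC]
      exact hq
  · rintro ⟨l, hbal, hov, C, hlast, hp⟩
    apply Subtype.ext
    show (l.map _).map _ = l
    rw [List.map_map]
    conv_rhs => rw [← List.map_id l]
    apply List.map_congr_left
    intro D hDl
    exact Gpre_Fimg hmono (ballot_block_subset hbal hDl)
  · rintro ⟨l, hbal, hov, C, hlast, hq⟩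
    apply Subtype.ext
    show (l.map _).map _ = l
    rw [List.map_map]
    conv_rhs => rw [← List.map_id l]
    apply List.map_congr_left
    intro D hDl
    exact Fimg_Gpre hsurj (ballot_block_subset hbal hDl)

end Transport

section Concrete
variable {n : ℕ} {B : Finset ℕ}

/-- The relabeling map after removing `B`. -/
def EB (B : Finset ℕ) (x : ℕ) : ℕ := x - (B.filter (· < x)).card

theorem filter_lt_card_le (hBn : B ⊆ Finset.Icc 1 n) {x : ℕ} (hx : 1 ≤ x) :
    (B.filter (· < x)).card ≤ x - 1 := by
  have h : B.filter (· < x) ⊆ Finset.Icc 1 (x - 1) := by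
    intro z hz
    simp only [Finset.mem_filter] at hz
    have h1 := (Finset.mem_Icc.1 (hBn hz.1)).1
    simp only [Finset.mem_Icc]
    omega
  calc (B.filter (· < x)).card ≤ (Finset.Icc 1 (x - 1)).card := Finset.card_le_card h
    _ = x - 1 := by rw [Nat.card_Icc]; omega

theorem filter_ge_card_le (hBn : B ⊆ Finset.Icc 1 n) {x : ℕ}
    (hx : x ∉ B) : (B.filter (fun z => ¬ z < x)).card ≤ n - x := by
  have h : B.filter (fun z => ¬ z < x) ⊆ Finset.Icc (x + 1) n := by
    intro z hz
    simp only [Finset.mem_filter, not_lt] at hz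
    have h1 := (Finset.mem_Icc.1 (hBn hz.1)).2
    have : z ≠ x := fun he => hx (he ▸ hz.1)
    simp only [Finset.mem_Icc]
    omega
  calc _ ≤ (Finset.Icc (x + 1) n).card := Finset.card_le_card h
    _ = n - x := by rw [Nat.card_Icc]; omega

theorem filter_split (B : Finset ℕ) (x : ℕ) :
    (B.filter (· < x)).card + (B.filter (fun z => ¬ z < x)).card = B.card :=
  Finset.card_filter_add_card_filter_not (fun z => z < x)

theorem EB_mapsto (hBn : B ⊆ Finset.Icc 1 n) :
    ∀ x ∈ Finset.Icc 1 n \ B, EB B x ∈ Finset.Icc 1 (n - B.card) := by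
  intro x hx
  rw [Finset.mem_sdiff, Finset.mem_Icc] at hx
  obtain ⟨⟨hx1, hxn⟩, hxB⟩ := hx
  have h1 := filter_lt_card_le hBn hx1
  have h2 := filter_ge_card_le hBn hxB
  have h3 := filter_split B x
  rw [Finset.mem_Icc, EB]
  omega

theorem EB_mono (hBn : B ⊆ Finset.Icc 1 n) :
    ∀ x ∈ Finset.Icc 1 n \ B, ∀ y ∈ Finset.Icc 1 n \ B, x < y → EB B x < EB B y := by
  intro x hx y hy hxy
  rw [Finset.mem_sdiff, Finset.mem_Icc] at hx hy
  obtain ⟨⟨hx1, hxn⟩, hxB⟩ := hx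
  obtain ⟨⟨hy1, hyn⟩, hyB⟩ := hy
  classical
  have hsplit : B.filter (· < y) = B.filter (· < x) ∪ B.filter (fun z => x < z ∧ z < y) := by
    ext z
    simp only [Finset.mem_filter, Finset.mem_union]
    constructor
    · rintro ⟨hz, hzy⟩
      have : z ≠ x := fun he => hxB (he ▸ hz)
      rcases lt_trichotomy z x with h | h | h
      · exact Or.inl ⟨hz, h⟩
      · exact absurd h this
      · exact Or.inr ⟨hz, h, hzy⟩
    · rintro (⟨hz, hzx⟩ | ⟨hz, hzx, hzy⟩)
      · exact ⟨hz, by omega⟩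
      · exact ⟨hz, hzy⟩
  have hcard : (B.filter (· < y)).card ≤ (B.filter (· < x)).card +
      (B.filter (fun z => x < z ∧ z < y)).card := by
    rw [hsplit]; exact Finset.card_union_le _ _
  have hmid : (B.filter (fun z => x < z ∧ z < y)).card ≤ y - x - 1 := by
    calc _ ≤ (Finset.Ioo x y).card := Finset.card_le_card (by
            intro z hz
            simp only [Finset.mem_filter] at hz
            simp only [Finset.mem_Ioo]
            exact hz.2)
      _ = y - x - 1 := by rw [Nat.card_Ioo]
  have h1 := filter_lt_card_le hBn hx1
  rw [EB, EB]
  omega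

theorem EB_image (hBn : B ⊆ Finset.Icc 1 n) :
    (Finset.Icc 1 n \ B).image (EB B) = Finset.Icc 1 (n - B.card) := by
  classical
  have hsub : (Finset.Icc 1 n \ B).image (EB B) ⊆ Finset.Icc 1 (n - B.card) := by
    intro y hy
    obtain ⟨x, hx, rfl⟩ := Finset.mem_image.1 hy
    exact EB_mapsto hBn x hx
  have hinj : Set.InjOn (EB B) (Finset.Icc 1 n \ B : Finset ℕ) := by
    intro x hx y hy h
    rcases lt_trichotomy x y with h' | h' | h'
    · exact absurd h (ne_of_lt (EB_mono hBn x (by exact_mod_cast hx) y (by exact_mod_cast hy) h'))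
    · exact h'
    · exact absurd h.symm (ne_of_lt (EB_mono hBn y (by exact_mod_cast hy) x (by exact_mod_cast hx) h'))
  have hcard : ((Finset.Icc 1 n \ B).image (EB B)).card = n - B.card := by
    rw [Finset.card_image_of_injOn hinj, Finset.card_sdiff_of_subset hBn, Nat.card_Icc]
    omega
  exact Finset.eq_of_subset_of_card_le hsub (by rw [hcard, Nat.card_Icc]; omega)

theorem EB_surj (hBn : B ⊆ Finset.Icc 1 n) :
    ∀ y ∈ Finset.Icc 1 (n - B.card), ∃ x ∈ Finset.Icc 1 n \ B, EB B x = y := by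
  intro y hy
  rw [← EB_image hBn] at hy
  obtain ⟨x, hx, rfl⟩ := Finset.mem_image.1 hy
  exact ⟨x, hx, rfl⟩

theorem EB_cond_min (hBn : B ⊆ Finset.Icc 1 n) (hB : B.Nonempty) {x : ℕ}
    (hx : x ∈ Finset.Icc 1 n \ B) : (bmin B < x ↔ bmin B ≤ EB B x) := by
  rw [Finset.mem_sdiff, Finset.mem_Icc] at hx
  obtain ⟨⟨hx1, hxn⟩, hxB⟩ := hx
  set c := bmin B with hc
  constructor
  · intro hcx
    have hsub : B.filter (· < x) ⊆ Finset.Icc c (x - 1) := by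
      intro z hz
      simp only [Finset.mem_filter] at hz
      have := bmin_le hz.1
      simp only [Finset.mem_Icc]
      omega
    have hle : (B.filter (· < x)).card ≤ x - c := by
      calc _ ≤ (Finset.Icc c (x-1)).card := Finset.card_le_card hsub
        _ = x - c := by rw [Nat.card_Icc]; omega
    rw [EB]; omega
  · intro h
    by_contra hcx
    push_neg at hcx
    have hne : x ≠ c := fun he => hxB (he ▸ bmin_mem hB)
    have hxc : x < c := by omega
    have : EB B x ≤ x := Nat.sub_le _ _
    omega

theorem EB_cond_max (hBn : B ⊆ Finset.Icc 1 n) (hB : B.Nonempty) {x : ℕ}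
    (hx : x ∈ Finset.Icc 1 n \ B) : (x < bmax B ↔ EB B x ≤ bmax B - B.card) := by
  rw [Finset.mem_sdiff, Finset.mem_Icc] at hx
  obtain ⟨⟨hx1, hxn⟩, hxB⟩ := hx
  set d := bmax B with hd
  have hcard_le : B.card ≤ d := by
    have hsub : B ⊆ Finset.Icc 1 d := fun z hz => by
      simp only [Finset.mem_Icc]
      exact ⟨(Finset.mem_Icc.1 (hBn hz)).1, le_bmax hz⟩
    calc B.card ≤ (Finset.Icc 1 d).card := Finset.card_le_card hsub
      _ = d := by rw [Nat.card_Icc]; omega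
  constructor
  · intro hxd
    have hsub : B.filter (fun z => ¬ z < x) ⊆ Finset.Icc (x + 1) d := by
      intro z hz
      simp only [Finset.mem_filter, not_lt] at hz
      have h1 := le_bmax hz.1
      have : z ≠ x := fun he => hxB (he ▸ hz.1)
      simp only [Finset.mem_Icc]
      omega
    have hle : (B.filter (fun z => ¬ z < x)).card ≤ d - x := by
      calc _ ≤ (Finset.Icc (x+1) d).card := Finset.card_le_card hsub
        _ = d - x := by rw [Nat.card_Icc]; omega
    have h3 := filter_split B x
    rw [EB]; omega
  · intro h
    by_contra hxd
    push_neg at hxd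
    have hne : x ≠ d := fun he => hxB (he ▸ bmax_mem hB)
    have hdx : d < x := by omega
    have hall : B.filter (· < x) = B := by
      apply Finset.filter_true_of_mem
      intro z hz
      have := le_bmax hz
      omega
    rw [EB, hall] at h
    omega

end Concrete

section Peel
open Finset

theorem peel {n : ℕ} {B : Finset ℕ} (hBn : B ⊆ Finset.Icc 1 n) (hBne : B.Nonempty) :
    Nat.card {l : List (Finset ℕ) // IsBallot (Finset.Icc 1 n) l ∧ Overlapping l ∧
      2 ≤ l.length ∧ l.getLast? = some B} =
    Nat.card {l : List (Finset ℕ) // IsBallot (Finset.Icc 1 n \ B) l ∧ Overlapping l ∧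
      ∃ C, l.getLast? = some C ∧ (bmin B < bmax C ∧ bmin C < bmax B)} := by
  apply Nat.card_congr
  refine {
    toFun := fun x => ⟨x.1.dropLast, ?_⟩
    invFun := fun y => ⟨y.1 ++ [B], ?_⟩
    left_inv := ?_
    right_inv := ?_ }
  · obtain ⟨l, hbal, hov, hlen, hlast⟩ := x
    have hdec : l.dropLast ++ [B] = l :=
      List.dropLast_append_getLast? B (Option.mem_def.2 hlast)
    rw [← hdec] at hbal hov
    have h1 := isBallot_concat.1 hbal
    simp only [Overlapping, List.Chain', List.isChain_append] at hov
    have hlend : l.dropLast ≠ [] := by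
      have : l.dropLast.length = l.length - 1 := List.length_dropLast
      intro h
      rw [h] at this
      simp at this
      omega
    refine ⟨h1.1, hov.1, l.dropLast.getLast hlend, List.getLast?_eq_getLast hlend, ?_⟩
    have := hov.2.2 (l.dropLast.getLast hlend)
      (by rw [List.getLast?_eq_getLast hlend]; rfl) B (by rfl)
    exact ⟨this.1, this.2⟩
  · obtain ⟨l, hbal, hov, C, hlast, hcond⟩ := y
    have hlne : l ≠ [] := by
      intro h; rw [h] at hlast; simp at hlast
    refine ⟨isBallot_concat.2 ⟨hbal, hBn, hBne⟩, ?_, ?_, List.getLast?_concat⟩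
    · simp only [Overlapping, List.Chain', List.isChain_append]
      refine ⟨hov, List.isChain_singleton _, ?_⟩
      intro x hx y hy
      simp only [List.head?_cons, Option.mem_def, Option.some.injEq] at hy
      subst hy
      rw [Option.mem_def, hlast] at hx
      obtain rfl : C = x := by injection hx
      exact hcond
    · rw [List.length_append]
      have : 1 ≤ l.length := List.length_pos_iff.2 hlne
      simp only [List.length_cons, List.length_nil]
      omega
  · rintro ⟨l, hbal, hov, hlen, hlast⟩
    apply Subtype.ext
    exact List.dropLast_append_getLast? B (Option.mem_def.2 hlast)
  · rintro ⟨l, hbal, hov, C, hlast, hcond⟩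
    apply Subtype.ext
    exact List.dropLast_concat

theorem sum_fcd {m N A c' : ℕ} (hmN : m ≤ N) :
    Nat.card {l : List (Finset ℕ) // IsBallot (Finset.Icc 1 m) l ∧ Overlapping l ∧
      ∃ C, l.getLast? = some C ∧ (bmin C ≤ A ∧ c' ≤ bmax C)} =
    ∑ a ∈ Finset.Icc 1 A, ∑ b ∈ Finset.Icc c' N, fcd a b m := by
  classical
  haveI : Finite {l : List (Finset ℕ) // IsBallot (Finset.Icc 1 m) l ∧ Overlapping l ∧
      ∃ C, l.getLast? = some C ∧ (bmin C ≤ A ∧ c' ≤ bmax C)} :=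
    finite_of_imp (fun l h => h.1)
  rw [card_partition (Finset.Icc 1 A ×ˢ Finset.Icc c' N)
    (fun l => (bmin (l.getLast?.getD ∅), bmax (l.getLast?.getD ∅))) ?_]
  · rw [Finset.sum_product]
    refine Finset.sum_congr rfl fun a ha => Finset.sum_congr rfl fun b hb => ?_
    simp only [Finset.mem_Icc] at ha hb
    apply Nat.card_congr
    apply Equiv.subtypeEquivRight
    intro l
    constructor
    · rintro ⟨⟨hbal, hov, C, hlast, h1, h2⟩, hfl⟩
      rw [hlast] at hfl
      simp only [Option.getD_some, Prod.mk.injEq] at hfl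
      exact ⟨hbal, hov, C, hlast, hfl.1, hfl.2⟩
    · rintro ⟨hbal, hov, C, hlast, h1, h2⟩
      refine ⟨⟨hbal, hov, C, hlast, le_trans (le_of_eq h1) ha.2,
        le_trans hb.1 (le_of_eq h2.symm)⟩, ?_⟩
      simp only [hlast, Option.getD_some]
      rw [h1, h2]
  · rintro l ⟨hbal, hov, C, hlast, h1, h2⟩
    simp only [hlast, Option.getD_some, Finset.mem_product, Finset.mem_Icc]
    have hCl : C ∈ l := List.mem_of_getLast? hlast
    have hCne : C.Nonempty := hbal.1 C hCl
    have hCsub : C ⊆ Finset.Icc 1 m := ballot_block_subset hbal hCl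
    have hmin := Finset.mem_Icc.1 (hCsub (bmin_mem hCne))
    have hmax := Finset.mem_Icc.1 (hCsub (bmax_mem hCne))
    exact ⟨⟨hmin.1, h1⟩, h2, le_trans hmax.2 hmN⟩

theorem key {n c d : ℕ} (hc : 1 ≤ c) (hdn : d ≤ n) {B : Finset ℕ}
    (hminB : bmin B = c) (hmaxB : bmax B = d) (N : ℕ) (hN : n - B.card ≤ N) :
    Nat.card {l : List (Finset ℕ) // IsBallot (Finset.Icc 1 n) l ∧ Overlapping l ∧
      2 ≤ l.length ∧ l.getLast? = some B} =
    ∑ a ∈ Finset.Icc 1 (d - B.card), ∑ b ∈ Finset.Icc c N, fcd a b (n - B.card) := by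
  have hBne : B.Nonempty := by
    rcases Finset.eq_empty_or_nonempty B with rfl | h
    · rw [bmin_empty] at hminB; omega
    · exact h
  have hBcd : B ⊆ Finset.Icc c d := subset_Icc_of_minmax hminB hmaxB
  have hBn : B ⊆ Finset.Icc 1 n := hBcd.trans (Finset.Icc_subset_Icc hc hdn)
  rw [peel hBn hBne]
  rw [transport (S := Finset.Icc 1 n \ B) (T := Finset.Icc 1 (n - B.card)) (E := EB B)
    (EB_mapsto hBn) (EB_mono hBn) (EB_surj hBn)
    (fun C => bmin B < bmax C ∧ bmin C < bmax B)
    (fun C => bmin C ≤ d - B.card ∧ c ≤ bmax C) ?_]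
  · exact sum_fcd hN
  · intro C hCne hCS
    rw [bmin_image (EB_mono hBn) hCS hCne, bmax_image (EB_mono hBn) hCS hCne]
    have h1 := EB_cond_min hBn hBne (hCS (bmax_mem hCne))
    have h2 := EB_cond_max hBn hBne (hCS (bmin_mem hCne))
    rw [hminB] at h1
    rw [hmaxB] at h2
    rw [hminB, hmaxB]
    constructor
    · rintro ⟨ha, hb⟩
      exact ⟨h2.1 hb, h1.1 ha⟩
    · rintro ⟨ha, hb⟩
      exact ⟨h1.2 hb, h2.2 ha⟩

end Peel

section Main
open Finset

theorem bmin_eq {B : Finset ℕ} {c : ℕ} (hmem : c ∈ B) (hlb : ∀ z ∈ B, c ≤ z) :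
    bmin B = c :=
  le_antisymm (bmin_le hmem) (hlb _ (bmin_mem ⟨c, hmem⟩))

theorem bmax_eq {B : Finset ℕ} {d : ℕ} (hmem : d ∈ B) (hub : ∀ z ∈ B, z ≤ d) :
    bmax B = d :=
  le_antisymm (Finset.sup_le hub) (le_bmax hmem)

theorem bmin_singleton (c : ℕ) : bmin {c} = c :=
  bmin_eq (Finset.mem_singleton_self c)
    (fun z hz => le_of_eq (Finset.mem_singleton.1 hz).symm)

theorem bmax_singleton (c : ℕ) : bmax {c} = c :=
  bmax_eq (Finset.mem_singleton_self c)
    (fun z hz => le_of_eq (Finset.mem_singleton.1 hz))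

theorem card_single {n c d : ℕ} (hc : 1 ≤ c) (hcd : c ≤ d) (hdn : d ≤ n) :
    Nat.card {l : List (Finset ℕ) // (IsBallot (Finset.Icc 1 n) l ∧ Overlapping l ∧
      ∃ B, l.getLast? = some B ∧ bmin B = c ∧ bmax B = d) ∧ l.length = 1} =
    if c = 1 ∧ d = n then 1 else 0 := by
  have hn : 1 ≤ n := le_trans hc (le_trans hcd hdn)
  have hstruct : ∀ l : List (Finset ℕ), ((IsBallot (Finset.Icc 1 n) l ∧ Overlapping l ∧
      ∃ B, l.getLast? = some B ∧ bmin B = c ∧ bmax B = d) ∧ l.length = 1) →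
      l = [Finset.Icc 1 n] ∧ c = 1 ∧ d = n := by
    rintro l ⟨⟨hbal, hov, B, hlast, h1, h2⟩, hlen⟩
    obtain ⟨C, rfl⟩ := List.length_eq_one_iff.1 hlen
    have hC : C = Finset.Icc 1 n := by
      have := hbal.2.2
      simpa using this
    subst hC
    obtain rfl : Finset.Icc 1 n = B := by
      have : some (Finset.Icc 1 n) = some B := by
        rw [← hlast]; rfl
      injection this
    refine ⟨rfl, ?_, ?_⟩
    · rw [← h1, bmin_Icc hn]
    · rw [← h2, bmax_Icc hn]
  split_ifs with h
  · have hb1 : bmin (Finset.Icc 1 n) = c := by rw [h.1]; exact bmin_Icc hn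
    have hb2 : bmax (Finset.Icc 1 n) = d := by rw [h.2]; exact bmax_Icc hn
    have hballot : IsBallot (Finset.Icc 1 n) [Finset.Icc 1 n] := by
      refine ⟨?_, List.pairwise_singleton _ _, by simp⟩
      intro B hB
      simp only [List.mem_singleton] at hB
      subst hB
      exact Finset.nonempty_Icc.2 hn
    haveI : Unique {l : List (Finset ℕ) // (IsBallot (Finset.Icc 1 n) l ∧ Overlapping l ∧
        ∃ B, l.getLast? = some B ∧ bmin B = c ∧ bmax B = d) ∧ l.length = 1} := by
      refine ⟨⟨⟨[Finset.Icc 1 n], ⟨hballot, List.isChain_singleton _,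
        ⟨Finset.Icc 1 n, rfl, hb1, hb2⟩⟩, rfl⟩⟩, ?_⟩
      rintro ⟨l, hl⟩
      exact Subtype.ext ((hstruct l hl).1)
    exact Nat.card_unique
  · haveI : IsEmpty {l : List (Finset ℕ) // (IsBallot (Finset.Icc 1 n) l ∧ Overlapping l ∧
        ∃ B, l.getLast? = some B ∧ bmin B = c ∧ bmax B = d) ∧ l.length = 1} := by
      refine ⟨fun x => h ?_⟩
      exact (hstruct x.1 x.2).2
    exact Nat.card_of_isEmpty

open Classical in
theorem multi_card {n c d : ℕ} (hc : 1 ≤ c) (hcd : c ≤ d) (hdn : d ≤ n) :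
    Nat.card {l : List (Finset ℕ) // (IsBallot (Finset.Icc 1 n) l ∧ Overlapping l ∧
      ∃ B, l.getLast? = some B ∧ bmin B = c ∧ bmax B = d) ∧ ¬ l.length = 1} =
    ∑ B ∈ (Finset.Icc c d).powerset.filter (fun B => bmin B = c ∧ bmax B = d),
      Nat.card {l : List (Finset ℕ) // IsBallot (Finset.Icc 1 n) l ∧ Overlapping l ∧
        2 ≤ l.length ∧ l.getLast? = some B} := by
  haveI : Finite {l : List (Finset ℕ) // (IsBallot (Finset.Icc 1 n) l ∧ Overlapping l ∧
      ∃ B, l.getLast? = some B ∧ bmin B = c ∧ bmax B = d) ∧ ¬ l.length = 1} :=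
    finite_of_imp (fun l h => h.1.1)
  rw [card_partition ((Finset.Icc c d).powerset.filter (fun B => bmin B = c ∧ bmax B = d))
    (fun l => l.getLast?.getD ∅) ?_]
  · refine Finset.sum_congr rfl fun B hB => ?_
    simp only [Finset.mem_filter, Finset.mem_powerset] at hB
    apply Nat.card_congr
    apply Equiv.subtypeEquivRight
    intro l
    constructor
    · rintro ⟨⟨⟨hbal, hov, B', hlast, h1, h2⟩, hlen⟩, hfB⟩
      simp only [hlast, Option.getD_some] at hfB
      subst hfB
      have hlne : l ≠ [] := by
        intro hl; rw [hl] at hlast; simp at hlast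
      have : 1 ≤ l.length := List.length_pos_iff.2 hlne
      exact ⟨hbal, hov, by omega, hlast⟩
    · rintro ⟨hbal, hov, hlen, hlast⟩
      refine ⟨⟨⟨hbal, hov, B, hlast, hB.2.1, hB.2.2⟩, by omega⟩, ?_⟩
      simp only [hlast, Option.getD_some]
  · rintro l ⟨⟨hbal, hov, B', hlast, h1, h2⟩, hlen⟩
    simp only [hlast, Option.getD_some, Finset.mem_filter, Finset.mem_powerset]
    exact ⟨subset_Icc_of_minmax h1 h2, h1, h2⟩

open Classical in
theorem sum_B_lt {n c d : ℕ} (hc : 1 ≤ c) (hlt : c < d) (hdn : d ≤ n) :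
    ∑ B ∈ (Finset.Icc c d).powerset.filter (fun B => bmin B = c ∧ bmax B = d),
      Nat.card {l : List (Finset ℕ) // IsBallot (Finset.Icc 1 n) l ∧ Overlapping l ∧
        2 ≤ l.length ∧ l.getLast? = some B} =
    ∑ ℓ ∈ Finset.range (d - c), Nat.choose (d - c - 1) ℓ *
      ∑ a ∈ Finset.Icc 1 (d - ℓ - 2), ∑ b ∈ Finset.Icc c (n - ℓ - 2),
        fcd a b (n - ℓ - 2) := by
  set G : ℕ → ℕ := fun k =>
    ∑ a ∈ Finset.Icc 1 (d - k), ∑ b ∈ Finset.Icc c (n - k), fcd a b (n - k) with hG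
  have step1 : ∑ B ∈ (Finset.Icc c d).powerset.filter (fun B => bmin B = c ∧ bmax B = d),
      Nat.card {l : List (Finset ℕ) // IsBallot (Finset.Icc 1 n) l ∧ Overlapping l ∧
        2 ≤ l.length ∧ l.getLast? = some B} =
      ∑ B ∈ (Finset.Icc c d).powerset.filter (fun B => bmin B = c ∧ bmax B = d),
        G B.card := by
    refine Finset.sum_congr rfl fun B hB => ?_
    simp only [Finset.mem_filter, Finset.mem_powerset] at hB
    exact key hc hdn hB.2.1 hB.2.2 (n - B.card) le_rfl
  rw [step1]
  have step2 : ∑ B ∈ (Finset.Icc c d).powerset.filter (fun B => bmin B = c ∧ bmax B = d),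
      G B.card = ∑ M ∈ (Finset.Ioo c d).powerset, G (M.card + 2) := by
    refine Finset.sum_bij' (fun B _ => B \ {c, d}) (fun M _ => insert c (insert d M))
      ?_ ?_ ?_ ?_ ?_
    · intro B hB
      simp only [Finset.mem_filter, Finset.mem_powerset] at hB
      rw [Finset.mem_powerset]
      intro z hz
      simp only [Finset.mem_sdiff, Finset.mem_insert, Finset.mem_singleton] at hz
      have := Finset.mem_Icc.1 (hB.1 hz.1)
      rw [Finset.mem_Ioo]
      omega
    · intro M hM
      rw [Finset.mem_powerset] at hM
      simp only [Finset.mem_filter, Finset.mem_powerset]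
      have hsub : insert c (insert d M) ⊆ Finset.Icc c d := by
        intro z hz
        simp only [Finset.mem_insert] at hz
        rcases hz with rfl | rfl | hz
        · simp [le_of_lt hlt]
        · simp [le_of_lt hlt]
        · have := Finset.mem_Ioo.1 (hM hz)
          rw [Finset.mem_Icc]; omega
      refine ⟨hsub, bmin_eq (by simp) ?_, bmax_eq (by simp) ?_⟩
      · intro z hz
        have := Finset.mem_Icc.1 (hsub hz)
        exact this.1
      · intro z hz
        have := Finset.mem_Icc.1 (hsub hz)
        exact this.2
    · intro B hB
      simp only [Finset.mem_filter, Finset.mem_powerset] at hB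
      have hBne : B.Nonempty := by
        rcases Finset.eq_empty_or_nonempty B with rfl | h
        · have h0 := hB.2.1
          rw [bmin_empty] at h0
          omega
        · exact h
      have hcB : c ∈ B := hB.2.1 ▸ bmin_mem hBne
      have hdB : d ∈ B := hB.2.2 ▸ bmax_mem hBne
      ext z
      simp only [Finset.mem_insert, Finset.mem_sdiff, Finset.mem_singleton]
      constructor
      · rintro (rfl | rfl | ⟨hz, _⟩)
        · exact hcB
        · exact hdB
        · exact hz
      · intro hz
        by_cases h1 : z = c
        · exact Or.inl h1
        · by_cases h2 : z = d
          · exact Or.inr (Or.inl h2)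
          · exact Or.inr (Or.inr ⟨hz, by tauto⟩)
    · intro M hM
      rw [Finset.mem_powerset] at hM
      ext z
      simp only [Finset.mem_sdiff, Finset.mem_insert, Finset.mem_singleton]
      constructor
      · rintro ⟨(rfl | rfl | hz), h2⟩
        · exact absurd (Or.inl rfl) h2
        · exact absurd (Or.inr rfl) h2
        · exact hz
      · intro hz
        have := Finset.mem_Ioo.1 (hM hz)
        exact ⟨Or.inr (Or.inr hz), by rintro (rfl | rfl) <;> omega⟩
    · intro B hB
      simp only [Finset.mem_filter, Finset.mem_powerset] at hB
      congr 1
      have hBne : B.Nonempty := by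
        rcases Finset.eq_empty_or_nonempty B with rfl | h
        · have h0 := hB.2.1
          rw [bmin_empty] at h0
          omega
        · exact h
      have hcB : c ∈ B := hB.2.1 ▸ bmin_mem hBne
      have hdB : d ∈ B := hB.2.2 ▸ bmax_mem hBne
      have hsub2 : {c, d} ⊆ B := by
        intro z hz
        simp only [Finset.mem_insert, Finset.mem_singleton] at hz
        rcases hz with rfl | rfl
        · exact hcB
        · exact hdB
      have hcard2 : ({c, d} : Finset ℕ).card = 2 := by
        rw [Finset.card_insert_of_notMem (by simp; omega), Finset.card_singleton]
      have := Finset.card_sdiff_of_subset hsub2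
      have hle := Finset.card_le_card hsub2
      rw [this, hcard2]
      omega
  rw [step2]
  rw [Finset.sum_powerset_apply_card (fun k => G (k + 2))]
  rw [Nat.card_Ioo]
  have hrange : d - c - 1 + 1 = d - c := by omega
  rw [hrange]
  refine Finset.sum_congr rfl fun ℓ hℓ => ?_
  rw [smul_eq_mul]
  show _ * (∑ a ∈ Finset.Icc 1 (d - (ℓ + 2)), ∑ b ∈ Finset.Icc c (n - (ℓ + 2)),
    fcd a b (n - (ℓ + 2))) = _
  have h1 : d - (ℓ + 2) = d - ℓ - 2 := by omega
  have h2 : n - (ℓ + 2) = n - ℓ - 2 := by omega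
  rw [h1, h2]

end Main

end St6

/-- the recurrence for `f_{c,d}(n)`, and `f_{c,d}(n) = 0` when `c > d`. -/
theorem statement6 (n c d : ℕ) :
    (1 ≤ c → c ≤ d → d ≤ n →
      fcd c d n =
        (if c = 1 ∧ d = n then 1 else 0) +
        (if c = d then
          ∑ a ∈ Finset.Icc 1 (c - 1), ∑ b ∈ Finset.Icc c n, fcd a b (n - 1)
        else 0) +
        (if c < d then
          ∑ ℓ ∈ Finset.range (d - c), Nat.choose (d - c - 1) ℓ *
            ∑ a ∈ Finset.Icc 1 (d - ℓ - 2), ∑ b ∈ Finset.Icc c (n - ℓ - 2),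
              fcd a b (n - ℓ - 2)
        else 0)) ∧
    (d < c → fcd c d n = 0) := by
  constructor
  · intro hc hcd hdn
    classical
    haveI : Finite {l : List (Finset ℕ) // IsBallot (Finset.Icc 1 n) l ∧ Overlapping l ∧
        ∃ B, l.getLast? = some B ∧ bmin B = c ∧ bmax B = d} :=
      St6.finite_of_imp (fun l h => h.1)
    have hsplit := St6.card_split (P := fun l : List (Finset ℕ) =>
      IsBallot (Finset.Icc 1 n) l ∧ Overlapping l ∧
        ∃ B, l.getLast? = some B ∧ bmin B = c ∧ bmax B = d) (Q := fun l => l.length = 1)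
    rw [show fcd c d n = Nat.card {l : List (Finset ℕ) // IsBallot (Finset.Icc 1 n) l ∧
        Overlapping l ∧ ∃ B, l.getLast? = some B ∧ bmin B = c ∧ bmax B = d} from rfl,
      hsplit, St6.card_single hc hcd hdn, St6.multi_card hc hcd hdn]
    rcases eq_or_lt_of_le hcd with rfl | hlt
    · rw [if_pos rfl, if_neg (lt_irrefl c)]
      have hBset : (Finset.Icc c c).powerset.filter (fun B => bmin B = c ∧ bmax B = c)
          = {{c}} := by
        ext B
        simp only [Finset.mem_filter, Finset.mem_powerset, Finset.mem_singleton,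
          Finset.Icc_self]
        constructor
        · rintro ⟨hsub, h1, h2⟩
          rcases Finset.subset_singleton_iff.1 hsub with rfl | h
          · rw [St6.bmin_empty] at h1; omega
          · exact h
        · rintro rfl
          exact ⟨Finset.Subset.refl _, St6.bmin_singleton c, St6.bmax_singleton c⟩
      rw [hBset, Finset.sum_singleton,
        St6.key hc hdn (St6.bmin_singleton c) (St6.bmax_singleton c) n (by omega),
        Finset.card_singleton]
      ring
    · rw [if_neg (by omega : ¬ c = d), if_pos hlt, St6.sum_B_lt hc hlt hdn]
      ring
  · intro hdc
    haveI : IsEmpty {l : List (Finset ℕ) // IsBallot (Finset.Icc 1 n) l ∧ Overlapping l ∧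
        ∃ B, l.getLast? = some B ∧ bmin B = c ∧ bmax B = d} := by
      refine ⟨fun x => ?_⟩
      obtain ⟨l, hbal, hov, B, hlast, h1, h2⟩ := x
      have hBl : B ∈ l := List.mem_of_getLast? hlast
      have hBne : B.Nonempty := hbal.1 B hBl
      have := St6.bmin_le_bmax hBne
      omega
    exact Nat.card_of_isEmpty
end
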